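/- arXiv:2506.16212 — 7 statements merged into one kernel-verified Lean document; each statement's English description precedes it below -/
import Mathlib

section
/- If f ∈ 𝓡 with f'(z) = 1 + Σ cₙ zⁿ, then the third Hankel determinant of inverse coefficients satisfies H₃(1)(f⁻¹) = (1/8640)·(−540c₁⁴c₂ − 432c₁²c₄ + 720c₁²c₂² + 576c₂c₄ − 540c₃² + 720c₁c₂c₃ + 135c₁⁶ − 640c₂³). -/
open Metric

/-- Third Hankel determinant of inverse coefficients of a bounded turning function
in terms of the coefficients of `f'`. -/
theorem stmt_2 (f g : ℂ → ℂ) (c A : ℕ → ℂ)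
    (hf : AnalyticOnNhd ℂ f (ball (0:ℂ) 1))
    (hf0 : f 0 = 0) (hf1 : deriv f 0 = 1) (hc0 : c 0 = 1)
    (hfc : ∀ z ∈ ball (0:ℂ) 1, HasSum (fun n => c n * z ^ n) (deriv f z))
    (hre : ∀ z ∈ ball (0:ℂ) 1, 0 < (deriv f z).re)
    (hA0 : A 0 = 0) (hA1 : A 1 = 1)
    (hgA : ∀ w : ℂ, ‖w‖ ≤ 1/4 → HasSum (fun n => A n * w ^ n) (g w))
    (hgball : ∀ w : ℂ, ‖w‖ ≤ 1/4 → g w ∈ ball (0:ℂ) 1)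
    (hinv : ∀ w : ℂ, ‖w‖ ≤ 1/4 → f (g w) = w) :
    2 * A 2 * A 3 * A 4 - A 3 ^ 3 - A 4 ^ 2 + A 3 * A 5 - A 2 ^ 2 * A 5 =
      (1 / 8640) * (-540 * c 1 ^ 4 * c 2 - 432 * c 1 ^ 2 * c 4
        + 720 * c 1 ^ 2 * c 2 ^ 2 + 576 * c 2 * c 4 - 540 * c 3 ^ 2
        + 720 * c 1 * c 2 * c 3 + 135 * c 1 ^ 6 - 640 * c 2 ^ 3) := by
  -- basic membership facts
  have hUsub : ∀ w : ℂ, w ∈ ball (0:ℂ) (1/4 : ℝ) → ‖w‖ ≤ 1/4 := by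
    intro w hw
    rw [mem_ball, dist_zero_right] at hw
    exact hw.le
  -- power series for g on the ball of radius 1/4
  have hgser : HasFPowerSeriesOnBall g (FormalMultilinearSeries.ofScalars ℂ A) 0
      ((1/4 : NNReal) : ENNReal) := by
    refine ⟨?_, by norm_num, ?_⟩
    · apply FormalMultilinearSeries.le_radius_of_tendsto (l := 0)
      have hsum := (hgA ((1/4 : ℝ) : ℂ) (by rw [Complex.norm_real]; norm_num)).summable
      have h2 := hsum.tendsto_atTop_zero.norm
      rw [norm_zero] at h2
      have he : (fun n => ‖FormalMultilinearSeries.ofScalars ℂ A n‖ * ((1/4 : NNReal) : ℝ) ^ n)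
          = fun n => ‖A n * ((1/4 : ℝ) : ℂ) ^ n‖ := by
        funext n
        rw [FormalMultilinearSeries.ofScalars_norm, norm_mul, norm_pow, Complex.norm_real]
        norm_num
      rw [he]
      exact h2
    · intro y hy
      rw [EMetric.mem_ball, edist_zero_right] at hy
      have hy' : ‖y‖ ≤ 1/4 := by
        have : (‖y‖₊ : ℝ) < ((1/4 : NNReal) : ℝ) := by exact_mod_cast hy
        simpa using this.le
      have h := hgA y hy'
      have he : (fun n => FormalMultilinearSeries.ofScalars ℂ A n fun _ => y)
          = fun n => A n * y ^ n := by
        funext n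
        rw [FormalMultilinearSeries.ofScalars_apply_eq, smul_eq_mul]
      rw [he, zero_add]
      exact h
  -- power series for deriv f on the ball of radius 1/2
  have hfser : HasFPowerSeriesOnBall (deriv f) (FormalMultilinearSeries.ofScalars ℂ c) 0
      ((1/2 : NNReal) : ENNReal) := by
    refine ⟨?_, by norm_num, ?_⟩
    · apply FormalMultilinearSeries.le_radius_of_tendsto (l := 0)
      have hmem : ((1/2 : ℝ) : ℂ) ∈ ball (0:ℂ) 1 := by
        rw [mem_ball, dist_zero_right, Complex.norm_real]; norm_num
      have hsum := (hfc ((1/2 : ℝ) : ℂ) hmem).summable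
      have h2 := hsum.tendsto_atTop_zero.norm
      rw [norm_zero] at h2
      have he : (fun n => ‖FormalMultilinearSeries.ofScalars ℂ c n‖ * ((1/2 : NNReal) : ℝ) ^ n)
          = fun n => ‖c n * ((1/2 : ℝ) : ℂ) ^ n‖ := by
        funext n
        rw [FormalMultilinearSeries.ofScalars_norm, norm_mul, norm_pow, Complex.norm_real]
        norm_num
      rw [he]
      exact h2
    · intro y hy
      rw [EMetric.mem_ball, edist_zero_right] at hy
      have hy' : y ∈ ball (0:ℂ) 1 := by
        rw [mem_ball, dist_zero_right]
        have : (‖y‖₊ : ℝ) < ((1/2 : NNReal) : ℝ) := by exact_mod_cast hy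
        have h12 : ((1/2 : NNReal) : ℝ) = 1/2 := by norm_num
        rw [h12] at this
        calc ‖y‖ = (‖y‖₊ : ℝ) := by simp
        _ < 1/2 := this
        _ < 1 := by norm_num
      have h := hfc y hy'
      have he : (fun n => FormalMultilinearSeries.ofScalars ℂ c n fun _ => y)
          = fun n => c n * y ^ n := by
        funext n
        rw [FormalMultilinearSeries.ofScalars_apply_eq, smul_eq_mul]
      rw [he, zero_add]
      exact h
  -- coefficients of g as derivatives
  have hgd : ∀ n : ℕ, deriv^[n] g 0 = (n.factorial : ℂ) * A n := by
    intro n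
    have h := hgser.factorial_smul (1 : ℂ) n
    rw [FormalMultilinearSeries.ofScalars_apply_eq, ← iteratedDeriv_eq_iteratedFDeriv,
      iteratedDeriv_eq_iterate] at h
    rw [← h]
    simp [smul_eq_mul]
  -- coefficients of c as derivatives of f
  have hfd : ∀ n : ℕ, deriv^[n+1] f 0 = (n.factorial : ℂ) * c n := by
    intro n
    have h := hfser.factorial_smul (1 : ℂ) n
    rw [FormalMultilinearSeries.ofScalars_apply_eq, ← iteratedDeriv_eq_iteratedFDeriv,
      iteratedDeriv_eq_iterate, ← iteratedDeriv_eq_iterate, ← iteratedDeriv_succ',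
      iteratedDeriv_eq_iterate] at h
    rw [← h]
    simp [smul_eq_mul]
  have hg0 : g 0 = 0 := by
    have h := hgA 0 (by norm_num)
    have h0 : (fun n => A n * (0:ℂ) ^ n) = fun _ => 0 := by
      funext n
      cases n with
      | zero => simpa using hA0
      | succ m => simp
    rw [h0] at h
    simpa using h.unique hasSum_zero
  -- analyticity on the small ball
  have hgan : AnalyticOnNhd ℂ g (ball (0:ℂ) (1/4 : ℝ)) := by
    intro w hw
    apply hgser.analyticAt_of_mem
    rw [Metric.emetric_ball_nnreal]
    simpa using hw
  have hgmem : ∀ w ∈ ball (0:ℂ) (1/4 : ℝ), g w ∈ ball (0:ℂ) 1 :=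
    fun w hw => hgball w (hUsub w hw)
  -- derivative machinery
  have Hg : ∀ (j : ℕ) (w : ℂ), w ∈ ball (0:ℂ) (1/4 : ℝ) →
      HasDerivAt (deriv^[j] g) (deriv^[j+1] g w) w := by
    intro j w hw
    have h := ((hgan.iterated_deriv j) w hw).differentiableAt.hasDerivAt
    rw [Function.iterate_succ_apply']
    exact h
  have Hf : ∀ (k : ℕ) (w : ℂ), w ∈ ball (0:ℂ) (1/4 : ℝ) →
      HasDerivAt (fun x => deriv^[k] f (g x)) (deriv^[k+1] f (g w) * deriv^[1] g w) w := by
    intro k w hw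
    have h1 : HasDerivAt (deriv^[k] f) (deriv^[k+1] f (g w)) (g w) := by
      have h := ((hf.iterated_deriv k) (g w) (hgmem w hw)).differentiableAt.hasDerivAt
      rw [Function.iterate_succ_apply']
      exact h
    exact h1.comp w (Hg 0 w hw)
  have hnhds : ∀ w : ℂ, w ∈ ball (0:ℂ) (1/4 : ℝ) → ball (0:ℂ) (1/4 : ℝ) ∈ nhds w :=
    fun w hw => isOpen_ball.mem_nhds hw
  -- the cascade of identities
  have E1 : ∀ w ∈ ball (0:ℂ) (1/4 : ℝ), (deriv^[1] f (g w) * deriv^[1] g w) = 1 := by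
    intro w hw
    have hD := Hf 0 w hw
    have hC : HasDerivAt (fun x => deriv^[0] f (g x)) 1 w := by
      refine (hasDerivAt_id w).congr_of_eventuallyEq ?_
      filter_upwards [hnhds w hw] with x hx using hinv x (hUsub x hx)
    exact hD.unique hC
  have E2 : ∀ w ∈ ball (0:ℂ) (1/4 : ℝ), (((deriv^[2] f (g w) * deriv^[1] g w) * deriv^[1] g w) + (deriv^[1] f (g w) * deriv^[2] g w)) = 0 := by
    intro w hw
    have hD := ((Hf 1 w hw).mul (Hg 1 w hw))
    have hC : HasDerivAt (fun x => (deriv^[1] f (g x) * deriv^[1] g x)) (0 : ℂ) w := by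
      refine (hasDerivAt_const w (1 : ℂ)).congr_of_eventuallyEq ?_
      filter_upwards [hnhds w hw] with x hx using E1 x hx
    exact hD.unique hC
  have E3 : ∀ w ∈ ball (0:ℂ) (1/4 : ℝ), ((((((deriv^[3] f (g w) * deriv^[1] g w) * deriv^[1] g w) + (deriv^[2] f (g w) * deriv^[2] g w)) * deriv^[1] g w) + ((deriv^[2] f (g w) * deriv^[1] g w) * deriv^[2] g w)) + (((deriv^[2] f (g w) * deriv^[1] g w) * deriv^[2] g w) + (deriv^[1] f (g w) * deriv^[3] g w))) = 0 := by
    intro w hw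
    have hD := ((((Hf 2 w hw).mul (Hg 1 w hw)).mul (Hg 1 w hw)).add ((Hf 1 w hw).mul (Hg 2 w hw)))
    have hC : HasDerivAt (fun x => (((deriv^[2] f (g x) * deriv^[1] g x) * deriv^[1] g x) + (deriv^[1] f (g x) * deriv^[2] g x))) (0 : ℂ) w := by
      refine (hasDerivAt_const w (0 : ℂ)).congr_of_eventuallyEq ?_
      filter_upwards [hnhds w hw] with x hx using E2 x hx
    exact hD.unique hC
  have E4 : ∀ w ∈ ball (0:ℂ) (1/4 : ℝ), ((((((((((deriv^[4] f (g w) * deriv^[1] g w) * deriv^[1] g w) + (deriv^[3] f (g w) * deriv^[2] g w)) * deriv^[1] g w) + ((deriv^[3] f (g w) * deriv^[1] g w) * deriv^[2] g w)) + (((deriv^[3] f (g w) * deriv^[1] g w) * deriv^[2] g w) + (deriv^[2] f (g w) * deriv^[3] g w))) * deriv^[1] g w) + ((((deriv^[3] f (g w) * deriv^[1] g w) * deriv^[1] g w) + (deriv^[2] f (g w) * deriv^[2] g w)) * deriv^[2] g w)) + (((((deriv^[3] f (g w) * deriv^[1] g w) * deriv^[1] g w) + (deriv^[2] f (g w) *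 deriv^[2] g w)) * deriv^[2] g w) + ((deriv^[2] f (g w) * deriv^[1] g w) * deriv^[3] g w))) + ((((((deriv^[3] f (g w) * deriv^[1] g w) * deriv^[1] g w) + (deriv^[2] f (g w) * deriv^[2] g w)) * deriv^[2] g w) + ((deriv^[2] f (g w) * deriv^[1] g w) * deriv^[3] g w)) + (((deriv^[2] f (g w) * deriv^[1] g w) * deriv^[3] g w) + (deriv^[1] f (g w) * deriv^[4] g w)))) = 0 := by
    intro w hw
    have hD := (((((((Hf 3 w hw).mul (Hg 1 w hw)).mul (Hg 1 w hw)).add ((Hf 2 w hw).mul (Hg 2 w hw))).mul (Hg 1 w hw)).add (((Hf 2 w hw).mul (Hg 1 w hw)).mul (Hg 2 w hw))).add ((((Hf 2 w hw).mul (Hg 1 w hw)).mul (Hg 2 w hw)).add ((Hf 1 w hw).mul (Hg 3 w hw))))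
    have hC : HasDerivAt (fun x => ((((((deriv^[3] f (g x) * deriv^[1] g x) * deriv^[1] g x) + (deriv^[2] f (g x) * deriv^[2] g x)) * deriv^[1] g x) + ((deriv^[2] f (g x) * deriv^[1] g x) * deriv^[2] g x)) + (((deriv^[2] f (g x) * deriv^[1] g x) * deriv^[2] g x) + (deriv^[1] f (g x) * deriv^[3] g x)))) (0 : ℂ) w := by
      refine (hasDerivAt_const w (0 : ℂ)).congr_of_eventuallyEq ?_
      filter_upwards [hnhds w hw] with x hx using E3 x hx
    exact hD.unique hC
  have h0 : (0:ℂ) ∈ ball (0:ℂ) (1/4 : ℝ) := mem_ball_self (by norm_num)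
  have hD5 := (((((((((((Hf 4 0 h0).mul (Hg 1 0 h0)).mul (Hg 1 0 h0)).add ((Hf 3 0 h0).mul (Hg 2 0 h0))).mul (Hg 1 0 h0)).add (((Hf 3 0 h0).mul (Hg 1 0 h0)).mul (Hg 2 0 h0))).add ((((Hf 3 0 h0).mul (Hg 1 0 h0)).mul (Hg 2 0 h0)).add ((Hf 2 0 h0).mul (Hg 3 0 h0)))).mul (Hg 1 0 h0)).add (((((Hf 3 0 h0).mul (Hg 1 0 h0)).mul (Hg 1 0 h0)).add ((Hf 2 0 h0).mul (Hg 2 0 h0))).mul (Hg 2 0 h0))).add ((((((Hf 3 0 h0).mul (Hg 1 0 h0)).mul (Hg 1 0 h0)).add ((Hf 2 0 h0).mul (Hg 2 0 h0))).mul (Hg 2 0 h0)).add (((Hf 2 0 h0).mul (Hg 1 0 h0)).mul (Hg 3 0 h0)))).add (((((((Hf 3 0 h0).mul (Hg 1 0 h0)).mul (Hg 1 0 h0)).add ((Hf 2 0 h0).mul (Hg 2 0 h0))).mul (Hg 2 0 h0)).add (((Hf 2 0 h0).mul (Hg 1 0 h0)).mul (Hg 3 0 h0))).add ((((Hf 2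 0 h0).mul (Hg 1 0 h0)).mul (Hg 3 0 h0)).add ((Hf 1 0 h0).mul (Hg 4 0 h0)))))
  have hC5 : HasDerivAt (fun x => ((((((((((deriv^[4] f (g x) * deriv^[1] g x) * deriv^[1] g x) + (deriv^[3] f (g x) * deriv^[2] g x)) * deriv^[1] g x) + ((deriv^[3] f (g x) * deriv^[1] g x) * deriv^[2] g x)) + (((deriv^[3] f (g x) * deriv^[1] g x) * deriv^[2] g x) + (deriv^[2] f (g x) * deriv^[3] g x))) * deriv^[1] g x) + ((((deriv^[3] f (g x) * deriv^[1] g x) * deriv^[1] g x) + (deriv^[2] f (g x) * deriv^[2] g x)) * deriv^[2] g x)) + (((((deriv^[3] f (g x) * deriv^[1] g x) * deriv^[1] g x) + (deriv^[2] f (g x) * deriv^[2] g x)) * deriv^[2] g x) + ((deriv^[2] f (g x) * deriv^[1] g x) * deriv^[3] g x))) + ((((((deriv^[3] f (g x) * deriv^[1] g x) * deriv^[1] g x) + (deriv^[2] f (g x) * deriv^[2] g x)) * deriv^[2] g x) + ((deriv^[2] f (g x) * deriv^[1] g x) * deriv^[3] g x)) + (((deriv^[2] f (g x) * deriv^[1]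 g x) * deriv^[3] g x) + (deriv^[1] f (g x) * deriv^[4] g x))))) (0 : ℂ) 0 := by
    refine (hasDerivAt_const (0:ℂ) (0 : ℂ)).congr_of_eventuallyEq ?_
    filter_upwards [hnhds 0 h0] with x hx using E4 x hx
  have h5 := hD5.unique hC5
  have h2 := E2 0 h0
  have h3 := E3 0 h0
  have h4 := E4 0 h0
  -- turn derivatives into coefficients
  have hgd1 : deriv^[1] g 0 = 1 := by rw [hgd 1, hA1]; norm_num
  have hgd2 : deriv^[2] g 0 = 2 * A 2 := by rw [hgd 2]; norm_num [Nat.factorial]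
  have hgd3 : deriv^[3] g 0 = 6 * A 3 := by rw [hgd 3]; norm_num [Nat.factorial]
  have hgd4 : deriv^[4] g 0 = 24 * A 4 := by rw [hgd 4]; norm_num [Nat.factorial]
  have hgd5 : deriv^[5] g 0 = 120 * A 5 := by rw [hgd 5]; norm_num [Nat.factorial]
  have hfd1 : deriv^[1] f 0 = 1 := by have := hfd 0; rw [hc0] at this; simpa using this
  have hfd2 : deriv^[2] f 0 = c 1 := by have := hfd 1; simpa using this
  have hfd3 : deriv^[3] f 0 = 2 * c 2 := by
    have := hfd 2; norm_num [Nat.factorial] at this; simpa using this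
  have hfd4 : deriv^[4] f 0 = 6 * c 3 := by
    have := hfd 3; norm_num [Nat.factorial] at this; simpa using this
  have hfd5 : deriv^[5] f 0 = 24 * c 4 := by
    have := hfd 4; norm_num [Nat.factorial] at this; simpa using this
  simp only [Pi.mul_apply, Pi.add_apply, hg0, Nat.reduceAdd, hgd1, hgd2, hgd3, hgd4, hgd5,
    hfd1, hfd2, hfd3, hfd4, hfd5] at h2 h3 h4 h5
  -- clean polynomial relations
  have eq2 : c 1 + 2 * A 2 = 0 := by linear_combination h2
  have eq3 : 2 * c 2 + 6 * c 1 * A 2 + 6 * A 3 = 0 := by linear_combination h3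
  have eq4 : 6 * c 3 + 24 * c 2 * A 2 + 12 * c 1 * A 2 ^ 2 + 24 * c 1 * A 3 + 24 * A 4 = 0 := by
    linear_combination h4
  have eq5 : 24 * c 4 + 120 * c 3 * A 2 + 120 * c 2 * A 2 ^ 2 + 120 * c 2 * A 3
      + 120 * c 1 * A 2 * A 3 + 120 * c 1 * A 4 + 120 * A 5 = 0 := by
    linear_combination h5
  -- solve
  have hA2 : A 2 = -c 1 / 2 := by linear_combination eq2 / 2
  have hA3 : A 3 = c 1 ^ 2 / 2 - c 2 / 3 := by linear_combination eq3 / 6 - c 1 * hA2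
  have hA4 : A 4 = -5 * c 1 ^ 3 / 8 + 5 * c 1 * c 2 / 6 - c 3 / 4 := by
    linear_combination eq4 / 24 + (c 1 ^ 2 / 4 - c 2 - c 1 / 2 * A 2) * hA2 - c 1 * hA3
  have hA5 : A 5 = 7 * c 1 ^ 4 / 8 - 7 * c 1 ^ 2 * c 2 / 4 + 3 * c 1 * c 3 / 4
      + c 2 ^ 2 / 3 - c 4 / 5 := by
    linear_combination eq5 / 120 - c 1 * hA4 - (c 2 + c 1 * A 2) * hA3
      + (-c 3 - c 1 ^ 3 / 2 + 5 * c 1 * c 2 / 6 - c 2 * A 2) * hA2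
  rw [hA2, hA3, hA4, hA5]
  ring
end

section
/- Define g(s,u) = 208s⁶ + 16u(1−s²)[132s⁴ + 6s²(50−41s²)u + 4(35s⁴−61s²+44)u² + 9s²(1−s²)u³] + 288s(1−s²)(1−u²)[(1−s²)u² + 2(3+s²)u + 3s²] + 144(1−s²)(1−u²)[(1−s²)(15+u²) + 8s²u]. Then g(s,u) ≤ 2816 for all (s,u) ∈ [0,1] × [0,1]. -/
set_option maxHeartbeats 2000000 in

theorem stmt_3 (s u : ℝ) (hs : s ∈ Set.Icc (0:ℝ) 1) (hu : u ∈ Set.Icc (0:ℝ) 1) :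
    208 * s ^ 6
      + 16 * u * (1 - s ^ 2) * (132 * s ^ 4 + 6 * s ^ 2 * (50 - 41 * s ^ 2) * u
          + 4 * (35 * s ^ 4 - 61 * s ^ 2 + 44) * u ^ 2 + 9 * s ^ 2 * (1 - s ^ 2) * u ^ 3)
      + 288 * s * (1 - s ^ 2) * (1 - u ^ 2) * ((1 - s ^ 2) * u ^ 2
          + 2 * (3 + s ^ 2) * u + 3 * s ^ 2)
      + 144 * (1 - s ^ 2) * (1 - u ^ 2) * ((1 - s ^ 2) * (15 + u ^ 2) + 8 * s ^ 2 * u)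
    ≤ 2816 := by
  obtain ⟨hs0, hs1⟩ := hs
  obtain ⟨hu0, hu1⟩ := hu
  have h1s : (0:ℝ) ≤ 1 - s := by linarith
  have h1u : (0:ℝ) ≤ 1 - u := by linarith
  have key : 2816 - (208 * s ^ 6
      + 16 * u * (1 - s ^ 2) * (132 * s ^ 4 + 6 * s ^ 2 * (50 - 41 * s ^ 2) * u
          + 4 * (35 * s ^ 4 - 61 * s ^ 2 + 44) * u ^ 2 + 9 * s ^ 2 * (1 - s ^ 2) * u ^ 3)
      + 288 * s * (1 - s ^ 2) * (1 - u ^ 2) * ((1 - s ^ 2) * u ^ 2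
          + 2 * (3 + s ^ 2) * u + 3 * s ^ 2)
      + 144 * (1 - s ^ 2) * (1 - u ^ 2) * ((1 - s ^ 2) * (15 + u ^ 2) + 8 * s ^ 2 * u)) =
      656 * (s^0 * (1-s)^6 * u^0 * (1-u)^4)
      + 2624 * (s^0 * (1-s)^6 * u^1 * (1-u)^3)
      + 5952 * (s^0 * (1-s)^6 * u^2 * (1-u)^2)
      + 3840 * (s^0 * (1-s)^6 * u^3 * (1-u)^1)
      + 3936 * (s^1 * (1-s)^5 * u^0 * (1-u)^4)
      + 14016 * (s^1 * (1-s)^5 * u^1 * (1-u)^3)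
      + 30240 * (s^1 * (1-s)^5 * u^2 * (1-u)^2)
      + 19008 * (s^1 * (1-s)^5 * u^3 * (1-u)^1)
      + 14160 * (s^2 * (1-s)^4 * u^0 * (1-u)^4)
      + 46848 * (s^2 * (1-s)^4 * u^1 * (1-u)^3)
      + 75552 * (s^2 * (1-s)^4 * u^2 * (1-u)^2)
      + 41472 * (s^2 * (1-s)^4 * u^3 * (1-u)^1)
      + 1776 * (s^2 * (1-s)^4 * u^4 * (1-u)^0)
      + 29536 * (s^3 * (1-s)^3 * u^0 * (1-u)^4)
      + 97408 * (s^3 * (1-s)^3 * u^1 * (1-u)^3)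
      + 118560 * (s^3 * (1-s)^3 * u^2 * (1-u)^2)
      + 54336 * (s^3 * (1-s)^3 * u^3 * (1-u)^1)
      + 7104 * (s^3 * (1-s)^3 * u^4 * (1-u)^0)
      + 31008 * (s^4 * (1-s)^2 * u^0 * (1-u)^4)
      + 102336 * (s^4 * (1-s)^2 * u^1 * (1-u)^3)
      + 110400 * (s^4 * (1-s)^2 * u^2 * (1-u)^2)
      + 49344 * (s^4 * (1-s)^2 * u^3 * (1-u)^1)
      + 11424 * (s^4 * (1-s)^2 * u^4 * (1-u)^0)
      + 15168 * (s^5 * (1-s)^1 * u^0 * (1-u)^4)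
      + 49536 * (s^5 * (1-s)^1 * u^1 * (1-u)^3)
      + 57600 * (s^5 * (1-s)^1 * u^2 * (1-u)^2)
      + 31872 * (s^5 * (1-s)^1 * u^3 * (1-u)^1)
      + 8640 * (s^5 * (1-s)^1 * u^4 * (1-u)^0)
      + 2608 * (s^6 * (1-s)^0 * u^0 * (1-u)^4)
      + 10432 * (s^6 * (1-s)^0 * u^1 * (1-u)^3)
      + 15648 * (s^6 * (1-s)^0 * u^2 * (1-u)^2)
      + 10432 * (s^6 * (1-s)^0 * u^3 * (1-u)^1)
      + 2608 * (s^6 * (1-s)^0 * u^4 * (1-u)^0) := by ring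
  have pos : (0:ℝ) ≤ 656 * (s^0 * (1-s)^6 * u^0 * (1-u)^4)
      + 2624 * (s^0 * (1-s)^6 * u^1 * (1-u)^3)
      + 5952 * (s^0 * (1-s)^6 * u^2 * (1-u)^2)
      + 3840 * (s^0 * (1-s)^6 * u^3 * (1-u)^1)
      + 3936 * (s^1 * (1-s)^5 * u^0 * (1-u)^4)
      + 14016 * (s^1 * (1-s)^5 * u^1 * (1-u)^3)
      + 30240 * (s^1 * (1-s)^5 * u^2 * (1-u)^2)
      + 19008 * (s^1 * (1-s)^5 * u^3 * (1-u)^1)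
      + 14160 * (s^2 * (1-s)^4 * u^0 * (1-u)^4)
      + 46848 * (s^2 * (1-s)^4 * u^1 * (1-u)^3)
      + 75552 * (s^2 * (1-s)^4 * u^2 * (1-u)^2)
      + 41472 * (s^2 * (1-s)^4 * u^3 * (1-u)^1)
      + 1776 * (s^2 * (1-s)^4 * u^4 * (1-u)^0)
      + 29536 * (s^3 * (1-s)^3 * u^0 * (1-u)^4)
      + 97408 * (s^3 * (1-s)^3 * u^1 * (1-u)^3)
      + 118560 * (s^3 * (1-s)^3 * u^2 * (1-u)^2)
      + 54336 * (s^3 * (1-s)^3 * u^3 * (1-u)^1)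
      + 7104 * (s^3 * (1-s)^3 * u^4 * (1-u)^0)
      + 31008 * (s^4 * (1-s)^2 * u^0 * (1-u)^4)
      + 102336 * (s^4 * (1-s)^2 * u^1 * (1-u)^3)
      + 110400 * (s^4 * (1-s)^2 * u^2 * (1-u)^2)
      + 49344 * (s^4 * (1-s)^2 * u^3 * (1-u)^1)
      + 11424 * (s^4 * (1-s)^2 * u^4 * (1-u)^0)
      + 15168 * (s^5 * (1-s)^1 * u^0 * (1-u)^4)
      + 49536 * (s^5 * (1-s)^1 * u^1 * (1-u)^3)
      + 57600 * (s^5 * (1-s)^1 * u^2 * (1-u)^2)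
      + 31872 * (s^5 * (1-s)^1 * u^3 * (1-u)^1)
      + 8640 * (s^5 * (1-s)^1 * u^4 * (1-u)^0)
      + 2608 * (s^6 * (1-s)^0 * u^0 * (1-u)^4)
      + 10432 * (s^6 * (1-s)^0 * u^1 * (1-u)^3)
      + 15648 * (s^6 * (1-s)^0 * u^2 * (1-u)^2)
      + 10432 * (s^6 * (1-s)^0 * u^3 * (1-u)^1)
      + 2608 * (s^6 * (1-s)^0 * u^4 * (1-u)^0) := by positivity
  linarith
end

section
/- Define g₁(s,u) = 208s⁶ + 16u(1−s²)[132s⁴ + 6s²(50−41s²)u + 4(35s⁴−61s²+44)u² + 9s²(1−s²)u³] + 288s(1−s²)(1−u²)[(1−s²)u² + 2(3+s²)u + 3s²] + 1152(1−s²)(1−u²)[2(1−s²)u + s²]. Then g₁(s,u) ≤ 2816 for all (s,u) ∈ [0,1] × [0,1]. -/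
theorem stmt_4 (s u : ℝ) (hs : s ∈ Set.Icc (0:ℝ) 1) (hu : u ∈ Set.Icc (0:ℝ) 1) :
    208 * s ^ 6
      + 16 * u * (1 - s ^ 2) * (132 * s ^ 4 + 6 * s ^ 2 * (50 - 41 * s ^ 2) * u
          + 4 * (35 * s ^ 4 - 61 * s ^ 2 + 44) * u ^ 2 + 9 * s ^ 2 * (1 - s ^ 2) * u ^ 3)
      + 288 * s * (1 - s ^ 2) * (1 - u ^ 2) * ((1 - s ^ 2) * u ^ 2
          + 2 * (3 + s ^ 2) * u + 3 * s ^ 2)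
      + 1152 * (1 - s ^ 2) * (1 - u ^ 2) * (2 * (1 - s ^ 2) * u + s ^ 2)
    ≤ 2816 := by
  obtain ⟨hs0, hs1⟩ := hs
  obtain ⟨hu0, hu1⟩ := hu
  have h1s : (0:ℝ) ≤ 1 - s := by linarith
  have h1u : (0:ℝ) ≤ 1 - u := by linarith
  linarith [mul_nonneg (mul_nonneg (mul_nonneg (pow_nonneg hs0 0) (pow_nonneg h1s 6)) (pow_nonneg hu0 0)) (pow_nonneg h1u 4),
    mul_nonneg (mul_nonneg (mul_nonneg (pow_nonneg hs0 0) (pow_nonneg h1s 6)) (pow_nonneg hu0 1)) (pow_nonneg h1u 3),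
    mul_nonneg (mul_nonneg (mul_nonneg (pow_nonneg hs0 0) (pow_nonneg h1s 6)) (pow_nonneg hu0 2)) (pow_nonneg h1u 2),
    mul_nonneg (mul_nonneg (mul_nonneg (pow_nonneg hs0 0) (pow_nonneg h1s 6)) (pow_nonneg hu0 3)) (pow_nonneg h1u 1),
    mul_nonneg (mul_nonneg (mul_nonneg (pow_nonneg hs0 0) (pow_nonneg h1s 6)) (pow_nonneg hu0 4)) (pow_nonneg h1u 0),
    mul_nonneg (mul_nonneg (mul_nonneg (pow_nonneg hs0 1) (pow_nonneg h1s 5)) (pow_nonneg hu0 0)) (pow_nonneg h1u 4),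
    mul_nonneg (mul_nonneg (mul_nonneg (pow_nonneg hs0 1) (pow_nonneg h1s 5)) (pow_nonneg hu0 1)) (pow_nonneg h1u 3),
    mul_nonneg (mul_nonneg (mul_nonneg (pow_nonneg hs0 1) (pow_nonneg h1s 5)) (pow_nonneg hu0 2)) (pow_nonneg h1u 2),
    mul_nonneg (mul_nonneg (mul_nonneg (pow_nonneg hs0 1) (pow_nonneg h1s 5)) (pow_nonneg hu0 3)) (pow_nonneg h1u 1),
    mul_nonneg (mul_nonneg (mul_nonneg (pow_nonneg hs0 1) (pow_nonneg h1s 5)) (pow_nonneg hu0 4)) (pow_nonneg h1u 0),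
    mul_nonneg (mul_nonneg (mul_nonneg (pow_nonneg hs0 2) (pow_nonneg h1s 4)) (pow_nonneg hu0 0)) (pow_nonneg h1u 4),
    mul_nonneg (mul_nonneg (mul_nonneg (pow_nonneg hs0 2) (pow_nonneg h1s 4)) (pow_nonneg hu0 1)) (pow_nonneg h1u 3),
    mul_nonneg (mul_nonneg (mul_nonneg (pow_nonneg hs0 2) (pow_nonneg h1s 4)) (pow_nonneg hu0 2)) (pow_nonneg h1u 2),
    mul_nonneg (mul_nonneg (mul_nonneg (pow_nonneg hs0 2) (pow_nonneg h1s 4)) (pow_nonneg hu0 3)) (pow_nonneg h1u 1),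
    mul_nonneg (mul_nonneg (mul_nonneg (pow_nonneg hs0 2) (pow_nonneg h1s 4)) (pow_nonneg hu0 4)) (pow_nonneg h1u 0),
    mul_nonneg (mul_nonneg (mul_nonneg (pow_nonneg hs0 3) (pow_nonneg h1s 3)) (pow_nonneg hu0 0)) (pow_nonneg h1u 4),
    mul_nonneg (mul_nonneg (mul_nonneg (pow_nonneg hs0 3) (pow_nonneg h1s 3)) (pow_nonneg hu0 1)) (pow_nonneg h1u 3),
    mul_nonneg (mul_nonneg (mul_nonneg (pow_nonneg hs0 3) (pow_nonneg h1s 3)) (pow_nonneg hu0 2)) (pow_nonneg h1u 2),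
    mul_nonneg (mul_nonneg (mul_nonneg (pow_nonneg hs0 3) (pow_nonneg h1s 3)) (pow_nonneg hu0 3)) (pow_nonneg h1u 1),
    mul_nonneg (mul_nonneg (mul_nonneg (pow_nonneg hs0 3) (pow_nonneg h1s 3)) (pow_nonneg hu0 4)) (pow_nonneg h1u 0),
    mul_nonneg (mul_nonneg (mul_nonneg (pow_nonneg hs0 4) (pow_nonneg h1s 2)) (pow_nonneg hu0 0)) (pow_nonneg h1u 4),
    mul_nonneg (mul_nonneg (mul_nonneg (pow_nonneg hs0 4) (pow_nonneg h1s 2)) (pow_nonneg hu0 1)) (pow_nonneg h1u 3),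
    mul_nonneg (mul_nonneg (mul_nonneg (pow_nonneg hs0 4) (pow_nonneg h1s 2)) (pow_nonneg hu0 2)) (pow_nonneg h1u 2),
    mul_nonneg (mul_nonneg (mul_nonneg (pow_nonneg hs0 4) (pow_nonneg h1s 2)) (pow_nonneg hu0 3)) (pow_nonneg h1u 1),
    mul_nonneg (mul_nonneg (mul_nonneg (pow_nonneg hs0 4) (pow_nonneg h1s 2)) (pow_nonneg hu0 4)) (pow_nonneg h1u 0),
    mul_nonneg (mul_nonneg (mul_nonneg (pow_nonneg hs0 5) (pow_nonneg h1s 1)) (pow_nonneg hu0 0)) (pow_nonneg h1u 4),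
    mul_nonneg (mul_nonneg (mul_nonneg (pow_nonneg hs0 5) (pow_nonneg h1s 1)) (pow_nonneg hu0 1)) (pow_nonneg h1u 3),
    mul_nonneg (mul_nonneg (mul_nonneg (pow_nonneg hs0 5) (pow_nonneg h1s 1)) (pow_nonneg hu0 2)) (pow_nonneg h1u 2),
    mul_nonneg (mul_nonneg (mul_nonneg (pow_nonneg hs0 5) (pow_nonneg h1s 1)) (pow_nonneg hu0 3)) (pow_nonneg h1u 1),
    mul_nonneg (mul_nonneg (mul_nonneg (pow_nonneg hs0 5) (pow_nonneg h1s 1)) (pow_nonneg hu0 4)) (pow_nonneg h1u 0),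
    mul_nonneg (mul_nonneg (mul_nonneg (pow_nonneg hs0 6) (pow_nonneg h1s 0)) (pow_nonneg hu0 0)) (pow_nonneg h1u 4),
    mul_nonneg (mul_nonneg (mul_nonneg (pow_nonneg hs0 6) (pow_nonneg h1s 0)) (pow_nonneg hu0 1)) (pow_nonneg h1u 3),
    mul_nonneg (mul_nonneg (mul_nonneg (pow_nonneg hs0 6) (pow_nonneg h1s 0)) (pow_nonneg hu0 2)) (pow_nonneg h1u 2),
    mul_nonneg (mul_nonneg (mul_nonneg (pow_nonneg hs0 6) (pow_nonneg h1s 0)) (pow_nonneg hu0 3)) (pow_nonneg h1u 1),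
    mul_nonneg (mul_nonneg (mul_nonneg (pow_nonneg hs0 6) (pow_nonneg h1s 0)) (pow_nonneg hu0 4)) (pow_nonneg h1u 0)]
end

section
/- The function f₀(z) = −z + 2·arctanh(z) satisfies f₀'(z) = (1+z²)/(1−z²), belongs to the class 𝓡 of bounded turning functions, and its inverse coefficients satisfy A₂ = A₄ = 0, A₃ = −2/3, A₅ = 14/15, so that |H₃(1)(f₀⁻¹)| = 44/135. -/
open Metric Filter

section Helpers

noncomputable def ph (z : ℂ) : ℂ := (1 + z^2)/(1 - z^2)
noncomputable def p2 (z : ℂ) : ℂ := 4*z/(1 - z^2)^2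
noncomputable def p3 (z : ℂ) : ℂ := (4 + 12*z^2)/(1 - z^2)^3
noncomputable def p4 (z : ℂ) : ℂ := (48*z + 48*z^3)/(1 - z^2)^4
noncomputable def p5 (z : ℂ) : ℂ := (48 + 480*z^2 + 240*z^4)/(1 - z^2)^5

lemma one_sub_sq_ne {z : ℂ} (hz : ‖z‖ < 1) : 1 - z^2 ≠ 0 := by
  intro h
  have : z^2 = 1 := by linear_combination -h
  have : ‖z^2‖ = 1 := by rw [this]; simp
  rw [norm_pow] at this
  nlinarith [norm_nonneg z]

lemma hd_sq {z : ℂ} : HasDerivAt (fun z : ℂ => 1 - z^2) (-(2*z)) z := by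
  simpa using (hasDerivAt_pow 2 z).const_sub 1

lemma hd_ph {z : ℂ} (hz : (1:ℂ) - z^2 ≠ 0) : HasDerivAt ph (p2 z) z := by
  have h1 : HasDerivAt (fun z : ℂ => 1 + z^2) (2*z) z := by
    simpa using (hasDerivAt_pow 2 z).const_add 1
  have := h1.div hd_sq hz
  refine this.congr_deriv ?_
  unfold p2; field_simp; ring

lemma hd_p2 {z : ℂ} (hz : (1:ℂ) - z^2 ≠ 0) : HasDerivAt p2 (p3 z) z := by
  have h1 : HasDerivAt (fun z : ℂ => 4*z) (4:ℂ) z := by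
    simpa using (hasDerivAt_id z).const_mul (4:ℂ)
  have h2 : HasDerivAt (fun z : ℂ => (1 - z^2)^2) (2*(1-z^2)^1*(-(2*z))) z := hd_sq.pow 2
  have := h1.div h2 (pow_ne_zero 2 hz)
  refine this.congr_deriv ?_
  unfold p3; field_simp; ring

lemma hd_p3 {z : ℂ} (hz : (1:ℂ) - z^2 ≠ 0) : HasDerivAt p3 (p4 z) z := by
  have h1 : HasDerivAt (fun z : ℂ => 4 + 12*z^2) (12*(2*z)) z := by
    simpa using (((hasDerivAt_pow 2 z).const_mul (12:ℂ)).const_add 4)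
  have h2 : HasDerivAt (fun z : ℂ => (1 - z^2)^3) (3*(1-z^2)^2*(-(2*z))) z := hd_sq.pow 3
  have := h1.div h2 (pow_ne_zero 3 hz)
  refine this.congr_deriv ?_
  unfold p4; field_simp; ring

lemma hd_p4 {z : ℂ} (hz : (1:ℂ) - z^2 ≠ 0) : HasDerivAt p4 (p5 z) z := by
  have h1 : HasDerivAt (fun z : ℂ => 48*z + 48*z^3) (48 + 48*(3*z^2)) z := by
    have a := ((hasDerivAt_id z).const_mul (48:ℂ))
    have b := ((hasDerivAt_pow 3 z).const_mul (48:ℂ))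
    exact (a.add b).congr_deriv (by simp)
  have h2 : HasDerivAt (fun z : ℂ => (1 - z^2)^4) (4*(1-z^2)^3*(-(2*z))) z := hd_sq.pow 4
  have := h1.div h2 (pow_ne_zero 4 hz)
  refine this.congr_deriv ?_
  unfold p5; field_simp; ring

lemma re_frac_pos {u : ℂ} (hu : ‖u‖ < 1) : 0 < ((1 + u) / (1 - u)).re := by
  have h1 : (1:ℂ) - u ≠ 0 := by
    intro h
    have : u = 1 := by linear_combination -h
    simp [this] at hu
  have hn : 0 < Complex.normSq (1 - u) := Complex.normSq_pos.2 h1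
  rw [Complex.div_re, ← add_div]
  apply div_pos _ hn
  have hsq : u.re^2 + u.im^2 < 1 := by
    have : ‖u‖ < 1 := hu
    nlinarith [Complex.sq_norm u, Complex.normSq_apply u, norm_nonneg u]
  simp only [Complex.add_re, Complex.sub_re, Complex.one_re, Complex.add_im,
    Complex.sub_im, Complex.one_im]
  nlinarith

lemma hd_f0 {f₀ : ℂ → ℂ}
    (hf₀ : ∀ z : ℂ, f₀ z = -z + 2 * ((1 / 2 : ℂ) * Complex.log ((1 + z) / (1 - z))))
    {z : ℂ} (hz : ‖z‖ < 1) : HasDerivAt f₀ (ph z) z := by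
  have h1 : (1:ℂ) - z ≠ 0 := by
    intro h
    have : z = 1 := by linear_combination -h
    simp [this] at hz
  have h2 : (1:ℂ) + z ≠ 0 := by
    intro h
    have : z = -1 := by linear_combination h
    simp [this] at hz
  have hu : HasDerivAt (fun z : ℂ => (1 + z) / (1 - z)) (2/(1-z)^2) z := by
    have a : HasDerivAt (fun z : ℂ => 1 + z) (1:ℂ) z := (hasDerivAt_id z).const_add 1
    have b : HasDerivAt (fun z : ℂ => 1 - z) (-1:ℂ) z := by
      simpa using (hasDerivAt_id z).const_sub 1
    have := a.div b h1
    refine this.congr_deriv ?_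
    field_simp; ring
  have hs : (1 + z) / (1 - z) ∈ Complex.slitPlane :=
    Complex.mem_slitPlane_iff.2 (Or.inl (re_frac_pos hz))
  have hlog : HasDerivAt (fun z : ℂ => Complex.log ((1 + z) / (1 - z)))
      (((1 + z) / (1 - z))⁻¹ * (2/(1-z)^2)) z := by
    have := (Complex.hasDerivAt_log hs).comp z hu; exact this
  have hd : HasDerivAt (fun z : ℂ => -z + 2 * ((1 / 2 : ℂ) * Complex.log ((1 + z) / (1 - z))))
      (-1 + 2 * ((1/2 : ℂ) * (((1 + z) / (1 - z))⁻¹ * (2/(1-z)^2)))) z := by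
    exact (hasDerivAt_id z).neg.add ((hlog.const_mul (1/2:ℂ)).const_mul (2:ℂ))
  have hfn : f₀ = fun z : ℂ => -z + 2 * ((1 / 2 : ℂ) * Complex.log ((1 + z) / (1 - z))) :=
    funext hf₀
  rw [hfn]
  convert hd using 1
  unfold ph
  have h3 : (1:ℂ) - z^2 ≠ 0 := one_sub_sq_ne hz
  field_simp
  ring

lemma norm_quarter : ‖(1/4 : ℂ)‖ = 1/4 := by
  rw [norm_div]; simp

lemma g_hasFPSB {g : ℂ → ℂ} {A : ℕ → ℂ}
    (hgA : ∀ w : ℂ, ‖w‖ ≤ 1/4 → HasSum (fun n => A n * w ^ n) (g w)) :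
    HasFPowerSeriesOnBall g (FormalMultilinearSeries.ofScalars ℂ A) 0 ((1/4 : NNReal) : ENNReal) := by
  constructor
  · apply FormalMultilinearSeries.le_radius_of_isBigO
    have hs := (hgA (1/4 : ℂ) (by rw [norm_quarter])).summable
    have ht : Tendsto (fun n => ‖A n * (1/4:ℂ)^n‖) atTop (nhds 0) := by
      simpa using hs.tendsto_atTop_zero.norm
    have hb := ht.isBigO_one ℝ
    apply hb.congr' _ (by rfl)
    filter_upwards with n
    rw [FormalMultilinearSeries.ofScalars_norm, norm_mul, norm_pow, norm_quarter]
    norm_num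
  · norm_num
  · intro y hy
    have hy' : ‖y‖ ≤ 1/4 := by
      rw [Metric.mem_eball, edist_zero_right, enorm_eq_nnnorm, ENNReal.coe_lt_coe] at hy
      have := NNReal.coe_lt_coe.2 hy
      simp only [coe_nnnorm] at this
      norm_num at this ⊢
      linarith
    have := hgA y hy'
    rw [zero_add]
    have he : (fun n => FormalMultilinearSeries.ofScalars ℂ A n fun _ => y)
        = fun n => A n * y ^ n := by
      funext n
      simp [FormalMultilinearSeries.coeff, FormalMultilinearSeries.ofScalars, mul_comm]
    rw [he]
    exact this

lemma coeff_eq_iter {g : ℂ → ℂ} {A : ℕ → ℂ}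
    (S : HasFPowerSeriesOnBall g (FormalMultilinearSeries.ofScalars ℂ A) 0 ((1/4 : NNReal) : ENNReal))
    (n : ℕ) : (n.factorial : ℂ) * A n = deriv^[n] g 0 := by
  have h := S.factorial_smul (1 : ℂ) n
  rw [FormalMultilinearSeries.ofScalars_apply_eq] at h
  rw [← iteratedDeriv_eq_iteratedFDeriv, iteratedDeriv_eq_iterate] at h
  simpa [nsmul_eq_mul] using h

lemma hasDerivAt_eq_on {F G : ℂ → ℂ} {s : Set ℂ} (hs : IsOpen s) (h : ∀ w ∈ s, F w = G w)
    {w : ℂ} (hw : w ∈ s) {a b : ℂ} (hF : HasDerivAt F a w) (hG : HasDerivAt G b w) : a = b := by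
  have he : F =ᶠ[nhds w] G := Filter.eventuallyEq_of_mem (hs.mem_nhds hw) h
  exact hF.unique (hG.congr_of_eventuallyEq he)

end Helpers

/-- The extremal function `f₀(z) = -z + 2 arctanh z` for the class of bounded turning
functions: its derivative, membership in `𝓡`, inverse coefficients and Hankel
determinant value. -/
theorem stmt_9 (f₀ g : ℂ → ℂ) (A : ℕ → ℂ)
    (hf₀ : ∀ z : ℂ, f₀ z = -z + 2 * ((1 / 2 : ℂ) * Complex.log ((1 + z) / (1 - z))))
    (hA0 : A 0 = 0) (hA1 : A 1 = 1)
    (hgA : ∀ w : ℂ, ‖w‖ ≤ 1/4 → HasSum (fun n => A n * w ^ n) (g w))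
    (hgball : ∀ w : ℂ, ‖w‖ ≤ 1/4 → g w ∈ ball (0:ℂ) 1)
    (hinv : ∀ w : ℂ, ‖w‖ ≤ 1/4 → f₀ (g w) = w) :
    (∀ z ∈ ball (0:ℂ) 1, deriv f₀ z = (1 + z ^ 2) / (1 - z ^ 2)) ∧
    (∀ z ∈ ball (0:ℂ) 1, 0 < (deriv f₀ z).re) ∧
    A 2 = 0 ∧ A 3 = -2/3 ∧ A 4 = 0 ∧ A 5 = 14/15 ∧
    ‖(2 * A 2 * A 3 * A 4 - A 3 ^ 3 - A 4 ^ 2 + A 3 * A 5 - A 2 ^ 2 * A 5)‖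
      = 44 / 135 := by
  -- setup
  set B : Set ℂ := ball (0:ℂ) (1/4 : ℝ) with hB
  have hBopen : IsOpen B := isOpen_ball
  have S := g_hasFPSB hgA
  have hmemE : ∀ w ∈ B, w ∈ Metric.eball (0:ℂ) ((1/4 : NNReal) : ENNReal) := by
    intro w hw
    have h1 : ‖w‖ < 1/4 := mem_ball_zero_iff.1 hw
    rw [Metric.mem_eball, edist_zero_right, enorm_eq_nnnorm, ENNReal.coe_lt_coe, ← NNReal.coe_lt_coe]
    push_cast
    simpa using h1
  have hAg : AnalyticOnNhd ℂ g B := fun w hw => S.analyticOnNhd w (hmemE w hw)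
  have hAg1 : AnalyticOnNhd ℂ (deriv g) B := hAg.deriv
  have hAg2 : AnalyticOnNhd ℂ (deriv (deriv g)) B := hAg1.deriv
  have hAg3 : AnalyticOnNhd ℂ (deriv (deriv (deriv g))) B := hAg2.deriv
  have hAg4 : AnalyticOnNhd ℂ (deriv (deriv (deriv (deriv g)))) B := hAg3.deriv
  have hd0 : ∀ w ∈ B, HasDerivAt g (deriv g w) w :=
    fun w hw => (hAg w hw).differentiableAt.hasDerivAt
  have hd1 : ∀ w ∈ B, HasDerivAt (deriv g) (deriv (deriv g) w) w :=
    fun w hw => (hAg1 w hw).differentiableAt.hasDerivAt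
  have hd2 : ∀ w ∈ B, HasDerivAt (deriv (deriv g)) (deriv (deriv (deriv g)) w) w :=
    fun w hw => (hAg2 w hw).differentiableAt.hasDerivAt
  have hd3 : ∀ w ∈ B, HasDerivAt (deriv (deriv (deriv g))) (deriv (deriv (deriv (deriv g))) w) w :=
    fun w hw => (hAg3 w hw).differentiableAt.hasDerivAt
  have hd4 : ∀ w ∈ B, HasDerivAt (deriv (deriv (deriv (deriv g))))
      (deriv (deriv (deriv (deriv (deriv g)))) w) w :=
    fun w hw => (hAg4 w hw).differentiableAt.hasDerivAt
  have hwle : ∀ w ∈ B, ‖w‖ ≤ 1/4 := fun w hw => le_of_lt (mem_ball_zero_iff.1 hw)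
  have hgsmall : ∀ w ∈ B, ‖g w‖ < 1 := fun w hw => mem_ball_zero_iff.1 (hgball w (hwle w hw))
  have hne : ∀ w ∈ B, (1:ℂ) - (g w)^2 ≠ 0 := fun w hw => one_sub_sq_ne (hgsmall w hw)
  -- the chain of differentiated identities
  have E1 : ∀ w ∈ B, ph (g w) * deriv g w = 1 := by
    intro w hw
    have hF : HasDerivAt (fun w => f₀ (g w)) (ph (g w) * deriv g w) w :=
      (hd_f0 hf₀ (hgsmall w hw)).comp w (hd0 w hw)
    exact hasDerivAt_eq_on hBopen (fun w' hw' => hinv w' (hwle w' hw')) hw hF (hasDerivAt_id w)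
  have E2 : ∀ w ∈ B, p2 (g w) * (deriv g w)^2 + ph (g w) * deriv (deriv g) w = 0 := by
    intro w hw
    have hc : HasDerivAt (fun w => ph (g w)) (p2 (g w) * deriv g w) w :=
      (hd_ph (hne w hw)).comp w (hd0 w hw)
    have hF : HasDerivAt (fun w => ph (g w) * deriv g w)
        (p2 (g w) * (deriv g w)^2 + ph (g w) * deriv (deriv g) w) w := by
      have := hc.mul (hd1 w hw)
      refine this.congr_deriv ?_; ring
    exact hasDerivAt_eq_on hBopen E1 hw hF (hasDerivAt_const w 1)
  have E3 : ∀ w ∈ B, p3 (g w) * (deriv g w)^3 + 3 * p2 (g w) * deriv g w * deriv (deriv g) w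
      + ph (g w) * deriv (deriv (deriv g)) w = 0 := by
    intro w hw
    have hc2 : HasDerivAt (fun w => p2 (g w)) (p3 (g w) * deriv g w) w :=
      (hd_p2 (hne w hw)).comp w (hd0 w hw)
    have hcp : HasDerivAt (fun w => ph (g w)) (p2 (g w) * deriv g w) w :=
      (hd_ph (hne w hw)).comp w (hd0 w hw)
    have hF : HasDerivAt (fun w => p2 (g w) * (deriv g w)^2 + ph (g w) * deriv (deriv g) w)
        (p3 (g w) * (deriv g w)^3 + 3 * p2 (g w) * deriv g w * deriv (deriv g) w
          + ph (g w) * deriv (deriv (deriv g)) w) w := by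
      have t1 := hc2.mul ((hd1 w hw).pow 2)
      have t2 := hcp.mul (hd2 w hw)
      have := t1.add t2
      refine this.congr_deriv ?_; simp only [Pi.pow_apply, Pi.mul_apply]; ring
    exact hasDerivAt_eq_on hBopen E2 hw hF (hasDerivAt_const w 0)
  have E4 : ∀ w ∈ B, p4 (g w) * (deriv g w)^4 + 6 * p3 (g w) * (deriv g w)^2 * deriv (deriv g) w
      + 3 * p2 (g w) * (deriv (deriv g) w)^2 + 4 * p2 (g w) * deriv g w * deriv (deriv (deriv g)) w
      + ph (g w) * deriv (deriv (deriv (deriv g))) w = 0 := by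
    intro w hw
    have hc3 : HasDerivAt (fun w => p3 (g w)) (p4 (g w) * deriv g w) w :=
      (hd_p3 (hne w hw)).comp w (hd0 w hw)
    have hc2 : HasDerivAt (fun w => p2 (g w)) (p3 (g w) * deriv g w) w :=
      (hd_p2 (hne w hw)).comp w (hd0 w hw)
    have hcp : HasDerivAt (fun w => ph (g w)) (p2 (g w) * deriv g w) w :=
      (hd_ph (hne w hw)).comp w (hd0 w hw)
    have hF : HasDerivAt (fun w => p3 (g w) * (deriv g w)^3
        + 3 * p2 (g w) * deriv g w * deriv (deriv g) w
        + ph (g w) * deriv (deriv (deriv g)) w)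
        (p4 (g w) * (deriv g w)^4 + 6 * p3 (g w) * (deriv g w)^2 * deriv (deriv g) w
          + 3 * p2 (g w) * (deriv (deriv g) w)^2
          + 4 * p2 (g w) * deriv g w * deriv (deriv (deriv g)) w
          + ph (g w) * deriv (deriv (deriv (deriv g))) w) w := by
      have t1 := hc3.mul ((hd1 w hw).pow 3)
      have t2 := ((hc2.const_mul (3:ℂ)).mul (hd1 w hw)).mul (hd2 w hw)
      have t3 := hcp.mul (hd3 w hw)
      have := (t1.add t2).add t3
      refine this.congr_deriv ?_; simp only [Pi.pow_apply, Pi.mul_apply]; ring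
    exact hasDerivAt_eq_on hBopen E3 hw hF (hasDerivAt_const w 0)
  have E5 : ∀ w ∈ B, p5 (g w) * (deriv g w)^5 + 10 * p4 (g w) * (deriv g w)^3 * deriv (deriv g) w
      + 15 * p3 (g w) * deriv g w * (deriv (deriv g) w)^2
      + 10 * p3 (g w) * (deriv g w)^2 * deriv (deriv (deriv g)) w
      + 10 * p2 (g w) * deriv (deriv g) w * deriv (deriv (deriv g)) w
      + 5 * p2 (g w) * deriv g w * deriv (deriv (deriv (deriv g))) w
      + ph (g w) * deriv (deriv (deriv (deriv (deriv g)))) w = 0 := by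
    intro w hw
    have hc4 : HasDerivAt (fun w => p4 (g w)) (p5 (g w) * deriv g w) w :=
      (hd_p4 (hne w hw)).comp w (hd0 w hw)
    have hc3 : HasDerivAt (fun w => p3 (g w)) (p4 (g w) * deriv g w) w :=
      (hd_p3 (hne w hw)).comp w (hd0 w hw)
    have hc2 : HasDerivAt (fun w => p2 (g w)) (p3 (g w) * deriv g w) w :=
      (hd_p2 (hne w hw)).comp w (hd0 w hw)
    have hcp : HasDerivAt (fun w => ph (g w)) (p2 (g w) * deriv g w) w :=
      (hd_ph (hne w hw)).comp w (hd0 w hw)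
    have hF : HasDerivAt (fun w => p4 (g w) * (deriv g w)^4
        + 6 * p3 (g w) * (deriv g w)^2 * deriv (deriv g) w
        + 3 * p2 (g w) * (deriv (deriv g) w)^2
        + 4 * p2 (g w) * deriv g w * deriv (deriv (deriv g)) w
        + ph (g w) * deriv (deriv (deriv (deriv g))) w)
        (p5 (g w) * (deriv g w)^5 + 10 * p4 (g w) * (deriv g w)^3 * deriv (deriv g) w
          + 15 * p3 (g w) * deriv g w * (deriv (deriv g) w)^2
          + 10 * p3 (g w) * (deriv g w)^2 * deriv (deriv (deriv g)) w
          + 10 * p2 (g w) * deriv (deriv g) w * deriv (deriv (deriv g)) w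
          + 5 * p2 (g w) * deriv g w * deriv (deriv (deriv (deriv g))) w
          + ph (g w) * deriv (deriv (deriv (deriv (deriv g)))) w) w := by
      have t1 := hc4.mul ((hd1 w hw).pow 4)
      have t2 := ((hc3.const_mul (6:ℂ)).mul ((hd1 w hw).pow 2)).mul (hd2 w hw)
      have t3 := (hc2.const_mul (3:ℂ)).mul ((hd2 w hw).pow 2)
      have t4 := ((hc2.const_mul (4:ℂ)).mul (hd1 w hw)).mul (hd3 w hw)
      have t5 := hcp.mul (hd4 w hw)
      have := (((t1.add t2).add t3).add t4).add t5
      refine this.congr_deriv ?_; simp only [Pi.pow_apply, Pi.mul_apply]; ring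
    exact hasDerivAt_eq_on hBopen E4 hw hF (hasDerivAt_const w 0)
  -- values at 0
  have h0B : (0:ℂ) ∈ B := by simp [hB]
  have hg0 : g 0 = 0 := by
    have h := hgA 0 (by norm_num)
    have h2 : HasSum (fun n => A n * (0:ℂ)^n) (A 0 * (0:ℂ)^0) :=
      hasSum_single 0 (fun b hb => by simp [zero_pow hb])
    have := h.unique h2
    simpa [hA0] using this
  have ph0 : ph 0 = 1 := by norm_num [ph]
  have p20 : p2 0 = 0 := by norm_num [p2]
  have p30 : p3 0 = 4 := by norm_num [p3]
  have p40 : p4 0 = 0 := by norm_num [p4]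
  have p50 : p5 0 = 48 := by norm_num [p5]
  have v1 : deriv g 0 = 1 := by
    have h := E1 0 h0B
    rw [hg0, ph0, one_mul] at h
    exact h
  have v2 : deriv (deriv g) 0 = 0 := by
    have h := E2 0 h0B
    rw [hg0, ph0, p20, v1] at h
    simpa using h
  have v3 : deriv (deriv (deriv g)) 0 = -4 := by
    have h := E3 0 h0B
    rw [hg0, ph0, p20, p30, v1, v2] at h
    simp at h
    linear_combination h
  have v4 : deriv (deriv (deriv (deriv g))) 0 = 0 := by
    have h := E4 0 h0B
    rw [hg0, ph0, p20, p30, p40, v1, v2, v3] at h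
    simpa using h
  have v5 : deriv (deriv (deriv (deriv (deriv g)))) 0 = 112 := by
    have h := E5 0 h0B
    rw [hg0, ph0, p20, p30, p40, p50, v1, v2, v3, v4] at h
    simp at h
    linear_combination h
  -- coefficients
  have hA2v : A 2 = 0 := by
    have h := coeff_eq_iter S 2
    rw [show deriv^[2] g = deriv (deriv g) from rfl, v2] at h
    norm_num [Nat.factorial] at h
    exact h
  have hA3v : A 3 = -2/3 := by
    have h := coeff_eq_iter S 3
    rw [show deriv^[3] g = deriv (deriv (deriv g)) from rfl, v3] at h
    norm_num [Nat.factorial] at h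
    linear_combination h / 6
  have hA4v : A 4 = 0 := by
    have h := coeff_eq_iter S 4
    rw [show deriv^[4] g = deriv (deriv (deriv (deriv g))) from rfl, v4] at h
    norm_num [Nat.factorial] at h
    exact h
  have hA5v : A 5 = 14/15 := by
    have h := coeff_eq_iter S 5
    rw [show deriv^[5] g = deriv (deriv (deriv (deriv (deriv g)))) from rfl, v5] at h
    norm_num [Nat.factorial] at h
    linear_combination h / 120
  refine ⟨?_, ?_, hA2v, hA3v, hA4v, hA5v, ?_⟩
  · intro z hz
    exact (hd_f0 hf₀ (mem_ball_zero_iff.1 hz)).deriv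
  · intro z hz
    have h := mem_ball_zero_iff.1 hz
    rw [(hd_f0 hf₀ h).deriv]
    have hsq : ‖z^2‖ < 1 := by
      rw [norm_pow]
      exact pow_lt_one₀ (norm_nonneg z) h (by norm_num)
    exact re_frac_pos hsq
  · have hv : 2 * A 2 * A 3 * A 4 - A 3 ^ 3 - A 4 ^ 2 + A 3 * A 5 - A 2 ^ 2 * A 5
        = -(44/135 : ℂ) := by
      rw [hA2v, hA3v, hA4v, hA5v]; norm_num
    rw [hv, norm_neg, show (44/135 : ℂ) = ((44/135 : ℝ) : ℂ) by norm_num,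
      Complex.norm_real]
    norm_num
end

section
/- If f ∈ 𝓡₁ (i.e., f analytic on 𝔻, f(0)=0, f'(0)=1, and Re(f'(z) + z f''(z)) > 0 on 𝔻), then the third Hankel determinant of inverse coefficients satisfies H₃(1)(f⁻¹) = (1/74649600)·(−97200c₁⁴c₂ − 186624c₁²c₄ + 172800c₁²c₂² + 331776c₂c₄ − 291600c₃² + 18225c₁⁶ + 259200c₁c₂c₃ − 204800c₂³), where 1 + Σ cₙzⁿ = f'(z) + z f''(z). -/
open Metric Filter Nat

private lemma aux_ofScalars_coeff (A : ℕ → ℂ) (n : ℕ) :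
    (FormalMultilinearSeries.ofScalars ℂ A).coeff n = A n := by
  have h1 : (1 : Fin n → ℂ) = fun _ => 1 := rfl
  simp [FormalMultilinearSeries.coeff, FormalMultilinearSeries.ofScalars, h1]

private lemma aux_hasFPS {h : ℂ → ℂ} {A : ℕ → ℂ}
    (hs : ∀ᶠ z in nhds (0:ℂ), HasSum (fun n => A n * z ^ n) (h z)) :
    HasFPowerSeriesAt h (FormalMultilinearSeries.ofScalars ℂ A) 0 := by
  rw [hasFPowerSeriesAt_iff]
  filter_upwards [hs] with z hz
  have he : (fun n => z ^ n • (FormalMultilinearSeries.ofScalars ℂ A).coeff n)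
      = fun n => A n * z ^ n := by
    funext n
    rw [aux_ofScalars_coeff, smul_eq_mul, mul_comm]
  rw [he, zero_add]
  exact hz

private lemma aux_iteratedDeriv {h : ℂ → ℂ} {A : ℕ → ℂ}
    (hp : HasFPowerSeriesAt h (FormalMultilinearSeries.ofScalars ℂ A) 0) (n : ℕ) :
    iteratedDeriv n h 0 = (n ! : ℂ) * A n := by
  obtain ⟨r, hr⟩ := hp
  have h1 := hr.factorial_smul (y := (1 : ℂ)) n
  rw [iteratedDeriv_eq_iteratedFDeriv, ← h1, FormalMultilinearSeries.ofScalars_apply_eq,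
    nsmul_eq_mul]
  simp

/-- Third Hankel determinant of inverse coefficients for `f ∈ 𝓡₁` in terms of the
coefficients of `(z f'(z))' = f'(z) + z f''(z)`. -/
theorem stmt_12 (f g : ℂ → ℂ) (c A : ℕ → ℂ)
    (hf : AnalyticOnNhd ℂ f (ball (0:ℂ) 1))
    (hf0 : f 0 = 0) (hf1 : deriv f 0 = 1) (hc0 : c 0 = 1)
    (hfc : ∀ z ∈ ball (0:ℂ) 1,
      HasSum (fun n => c n * z ^ n) (deriv f z + z * deriv (deriv f) z))
    (hre : ∀ z ∈ ball (0:ℂ) 1, 0 < (deriv f z + z * deriv (deriv f) z).re)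
    (hA0 : A 0 = 0) (hA1 : A 1 = 1)
    (hgA : ∀ w : ℂ, ‖w‖ ≤ 1/4 → HasSum (fun n => A n * w ^ n) (g w))
    (hgball : ∀ w : ℂ, ‖w‖ ≤ 1/4 → g w ∈ ball (0:ℂ) 1)
    (hinv : ∀ w : ℂ, ‖w‖ ≤ 1/4 → f (g w) = w) :
    2 * A 2 * A 3 * A 4 - A 3 ^ 3 - A 4 ^ 2 + A 3 * A 5 - A 2 ^ 2 * A 5 =
      (1 / 74649600) * (-97200 * c 1 ^ 4 * c 2 - 186624 * c 1 ^ 2 * c 4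
        + 172800 * c 1 ^ 2 * c 2 ^ 2 + 331776 * c 2 * c 4 - 291600 * c 3 ^ 2
        + 18225 * c 1 ^ 6 + 259200 * c 1 * c 2 * c 3 - 204800 * c 2 ^ 3) := by
  -- value of `g` at 0
  have hg0 : g 0 = 0 := by
    have h := hgA 0 (by norm_num)
    have he : (fun n => A n * (0:ℂ) ^ n) = fun _ => (0:ℂ) := by
      funext n
      cases n <;> simp [hA0]
    rw [he] at h
    exact h.unique hasSum_zero
  -- power series of g
  have hq : HasFPowerSeriesAt g (FormalMultilinearSeries.ofScalars ℂ A) 0 := by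
    apply aux_hasFPS
    filter_upwards [closedBall_mem_nhds (0:ℂ) (by norm_num : (0:ℝ) < 1/4)] with z hz
    exact hgA z (by rwa [mem_closedBall_zero_iff] at hz)
  have hAd : ∀ n, iteratedDeriv n g 0 = (n ! : ℂ) * A n := aux_iteratedDeriv hq
  -- power series of P := (z f')'
  have hp : HasFPowerSeriesAt (fun z => deriv f z + z * deriv (deriv f) z)
      (FormalMultilinearSeries.ofScalars ℂ c) 0 := by
    apply aux_hasFPS
    filter_upwards [ball_mem_nhds (0:ℂ) one_pos] with z hz
    exact hfc z hz
  have hcd : ∀ n, iteratedDeriv n (fun z => deriv f z + z * deriv (deriv f) z) 0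
      = (n ! : ℂ) * c n := aux_iteratedDeriv hp
  -- analyticity of iterated derivatives of f on the unit ball
  have hfa : ∀ k, AnalyticOnNhd ℂ (iteratedDeriv k f) (ball (0:ℂ) 1) := by
    intro k
    rw [iteratedDeriv_eq_iterate]
    exact hf.iterated_deriv k
  have hfd : ∀ k, ∀ z ∈ ball (0:ℂ) 1,
      HasDerivAt (iteratedDeriv k f) (iteratedDeriv (k+1) f z) z := by
    intro k z hz
    have h1 := ((hfa k) z hz).differentiableAt.hasDerivAt
    have e : iteratedDeriv (k+1) f z = deriv (iteratedDeriv k f) z := by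
      rw [iteratedDeriv_succ]
    rw [e]
    exact h1
  -- iterated derivatives of P on the unit ball
  have hPn : ∀ n, ∀ z ∈ ball (0:ℂ) 1,
      iteratedDeriv n (fun z => deriv f z + z * deriv (deriv f) z) z
        = ((n:ℂ)+1) * iteratedDeriv (n+1) f z + z * iteratedDeriv (n+2) f z := by
    intro n
    induction n with
    | zero =>
      intro z hz
      rw [iteratedDeriv_zero]
      have e1 : iteratedDeriv 1 f = deriv f := iteratedDeriv_one
      have e2 : iteratedDeriv 2 f = deriv (deriv f) := by
        rw [iteratedDeriv_succ, iteratedDeriv_one]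
      rw [e1, e2]
      push_cast
      ring
    | succ n ih =>
      intro z hz
      rw [iteratedDeriv_succ]
      have heq : deriv (iteratedDeriv n (fun z => deriv f z + z * deriv (deriv f) z)) z
          = deriv (fun z => ((n:ℂ)+1) * iteratedDeriv (n+1) f z
              + z * iteratedDeriv (n+2) f z) z := by
        apply Filter.EventuallyEq.deriv_eq
        filter_upwards [isOpen_ball.eventually_mem hz] with y hy
        exact ih y hy
      rw [heq]
      have h1 : HasDerivAt (fun z => ((n:ℂ)+1) * iteratedDeriv (n+1) f z
          + z * iteratedDeriv (n+2) f z)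
          (((n:ℂ)+1) * iteratedDeriv (n+2) f z
            + (1 * iteratedDeriv (n+2) f z + z * iteratedDeriv (n+3) f z)) z :=
        ((hfd (n+1) z hz).const_mul _).add ((hasDerivAt_id' z).mul (hfd (n+2) z hz))
      rw [h1.deriv]
      push_cast
      ring
  have hcv : ∀ n, (n ! : ℂ) * c n = ((n:ℂ)+1) * iteratedDeriv (n+1) f 0 := by
    intro n
    have h := hPn n 0 (mem_ball_self one_pos)
    rw [← hcd n, h]
    ring
  -- a good neighborhood of 0
  have hga := hq.analyticAt.eventually_analyticAt
  have hmem : ({y | AnalyticAt ℂ g y} ∩ closedBall (0:ℂ) (1/4)) ∈ nhds (0:ℂ) :=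
    Filter.inter_mem hga (closedBall_mem_nhds (0:ℂ) (by norm_num))
  obtain ⟨ε, hε, hball⟩ := Metric.mem_nhds_iff.mp hmem
  set U := ball (0:ℂ) ε with hUdef
  have hU0 : (0:ℂ) ∈ U := mem_ball_self hε
  have hU4 : ∀ w ∈ U, ‖w‖ ≤ 1/4 := by
    intro w hw
    have := (hball hw).2
    rwa [mem_closedBall_zero_iff] at this
  have hgUa : AnalyticOnNhd ℂ g U := fun w hw => (hball hw).1
  have hmap : ∀ w ∈ U, g w ∈ ball (0:ℂ) 1 := fun w hw => hgball w (hU4 w hw)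
  have hid : ∀ w ∈ U, f (g w) = w := fun w hw => hinv w (hU4 w hw)
  have hgka : ∀ k, AnalyticOnNhd ℂ (iteratedDeriv k g) U := by
    intro k
    rw [iteratedDeriv_eq_iterate]
    exact hgUa.iterated_deriv k
  have hgd : ∀ k, ∀ w ∈ U, HasDerivAt (iteratedDeriv k g) (iteratedDeriv (k+1) g w) w := by
    intro k w hw
    have h1 := ((hgka k) w hw).differentiableAt.hasDerivAt
    have e : iteratedDeriv (k+1) g w = deriv (iteratedDeriv k g) w := by
      rw [iteratedDeriv_succ]
    rw [e]
    exact h1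
  have hPhid : ∀ k, ∀ w ∈ U, HasDerivAt (fun w => iteratedDeriv k f (g w))
      (iteratedDeriv (k+1) f (g w) * iteratedDeriv 1 g w) w := by
    intro k w hw
    have h1 : HasDerivAt (iteratedDeriv k f) (iteratedDeriv (k+1) f (g w)) (g w) :=
      hfd k (g w) (hmap w hw)
    have h2 : HasDerivAt g (iteratedDeriv 1 g w) w := by
      have h3 := (hgUa w hw).differentiableAt.hasDerivAt
      have e : iteratedDeriv 1 g w = deriv g w := by rw [iteratedDeriv_one]
      rw [e]
      exact h3
    exact h1.comp w h2
  -- the differentiation engine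
  have hstep : ∀ (F G F' G' : ℂ → ℂ), (∀ w ∈ U, HasDerivAt F (F' w) w) →
      (∀ w ∈ U, HasDerivAt G (G' w) w) → (∀ w ∈ U, F w = G w) →
      ∀ w ∈ U, F' w = G' w := by
    intro F G F' G' hF hG hFG w hw
    have h1 : deriv F w = deriv G w := by
      apply Filter.EventuallyEq.deriv_eq
      filter_upwards [isOpen_ball.eventually_mem hw] with y hy
      exact hFG y hy
    rw [← (hF w hw).deriv, ← (hG w hw).deriv]
    exact h1
  have e1 : ∀ w ∈ U, iteratedDeriv 1 f (g w) * iteratedDeriv 1 g w = 1 := by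
    refine hstep (fun w => iteratedDeriv 0 f (g w)) (fun w => w)
      (fun w => iteratedDeriv 1 f (g w) * iteratedDeriv 1 g w) (fun _ => (1:ℂ))
      (fun w hw => hPhid 0 w hw) (fun w hw => hasDerivAt_id' w) ?_
    intro w hw
    rw [iteratedDeriv_zero]
    exact hid w hw
  have e2 : ∀ w ∈ U, (((iteratedDeriv 2 f (g w) * iteratedDeriv 1 g w) * iteratedDeriv 1 g w) + (iteratedDeriv 1 f (g w) * iteratedDeriv 2 g w)) = 0 := by
    refine hstep (fun w => (iteratedDeriv 1 f (g w) * iteratedDeriv 1 g w)) (fun _ => (1:ℂ))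
      (fun w => (((iteratedDeriv 2 f (g w) * iteratedDeriv 1 g w) * iteratedDeriv 1 g w) + (iteratedDeriv 1 f (g w) * iteratedDeriv 2 g w)))
      (fun _ => (0:ℂ))
      (fun w hw => ((hPhid 1 w hw).mul (hgd 1 w hw)))
      (fun w hw => hasDerivAt_const w _) e1
  have e3 : ∀ w ∈ U, ((((((iteratedDeriv 3 f (g w) * iteratedDeriv 1 g w) * iteratedDeriv 1 g w) + (iteratedDeriv 2 f (g w) * iteratedDeriv 2 g w)) * iteratedDeriv 1 g w) + ((iteratedDeriv 2 f (g w) * iteratedDeriv 1 g w) * iteratedDeriv 2 g w)) + (((iteratedDeriv 2 f (g w) * iteratedDeriv 1 g w) * iteratedDeriv 2 g w) + (iteratedDeriv 1 f (g w) * iteratedDeriv 3 g w))) = 0 := by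
    refine hstep (fun w => (((iteratedDeriv 2 f (g w) * iteratedDeriv 1 g w) * iteratedDeriv 1 g w) + (iteratedDeriv 1 f (g w) * iteratedDeriv 2 g w))) (fun _ => (0:ℂ))
      (fun w => ((((((iteratedDeriv 3 f (g w) * iteratedDeriv 1 g w) * iteratedDeriv 1 g w) + (iteratedDeriv 2 f (g w) * iteratedDeriv 2 g w)) * iteratedDeriv 1 g w) + ((iteratedDeriv 2 f (g w) * iteratedDeriv 1 g w) * iteratedDeriv 2 g w)) + (((iteratedDeriv 2 f (g w) * iteratedDeriv 1 g w) * iteratedDeriv 2 g w) + (iteratedDeriv 1 f (g w) * iteratedDeriv 3 g w))))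
      (fun _ => (0:ℂ))
      (fun w hw => ((((hPhid 2 w hw).mul (hgd 1 w hw)).mul (hgd 1 w hw)).add ((hPhid 1 w hw).mul (hgd 2 w hw))))
      (fun w hw => hasDerivAt_const w _) e2
  have e4 : ∀ w ∈ U, ((((((((((iteratedDeriv 4 f (g w) * iteratedDeriv 1 g w) * iteratedDeriv 1 g w) + (iteratedDeriv 3 f (g w) * iteratedDeriv 2 g w)) * iteratedDeriv 1 g w) + ((iteratedDeriv 3 f (g w) * iteratedDeriv 1 g w) * iteratedDeriv 2 g w)) + (((iteratedDeriv 3 f (g w) * iteratedDeriv 1 g w) * iteratedDeriv 2 g w) + (iteratedDeriv 2 f (g w) * iteratedDeriv 3 g w))) * iteratedDeriv 1 g w) + ((((iteratedDeriv 3 f (g w) * iteratedDeriv 1 g w) * iteratedDeriv 1 g w) + (iteratedDeriv 2 f (g w) * iteratedDeriv 2 g w)) * iteratedDeriv 2 g w)) + (((((iteratedDeriv 3 f (g w) * iteratedDeriv 1 g w) * iteratedDeriv 1 g w) + (iteratedDeriv 2 f (g w) * iteratedDeriv 2 g w)) * iteratedDeriv 2 g w) + ((iteratedDeriv 2 f (g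 w) * iteratedDeriv 1 g w) * iteratedDeriv 3 g w))) + ((((((iteratedDeriv 3 f (g w) * iteratedDeriv 1 g w) * iteratedDeriv 1 g w) + (iteratedDeriv 2 f (g w) * iteratedDeriv 2 g w)) * iteratedDeriv 2 g w) + ((iteratedDeriv 2 f (g w) * iteratedDeriv 1 g w) * iteratedDeriv 3 g w)) + (((iteratedDeriv 2 f (g w) * iteratedDeriv 1 g w) * iteratedDeriv 3 g w) + (iteratedDeriv 1 f (g w) * iteratedDeriv 4 g w)))) = 0 := by
    refine hstep (fun w => ((((((iteratedDeriv 3 f (g w) * iteratedDeriv 1 g w) * iteratedDeriv 1 g w) + (iteratedDeriv 2 f (g w) * iteratedDeriv 2 g w)) * iteratedDeriv 1 g w) + ((iteratedDeriv 2 f (g w) * iteratedDeriv 1 g w) * iteratedDeriv 2 g w)) + (((iteratedDeriv 2 f (g w) * iteratedDeriv 1 g w) * iteratedDeriv 2 g w) + (iteratedDeriv 1 f (g w) * iteratedDeriv 3 g w)))) (fun _ => (0:ℂ))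
      (fun w => ((((((((((iteratedDeriv 4 f (g w) * iteratedDeriv 1 g w) * iteratedDeriv 1 g w) + (iteratedDeriv 3 f (g w) * iteratedDeriv 2 g w)) * iteratedDeriv 1 g w) + ((iteratedDeriv 3 f (g w) * iteratedDeriv 1 g w) * iteratedDeriv 2 g w)) + (((iteratedDeriv 3 f (g w) * iteratedDeriv 1 g w) * iteratedDeriv 2 g w) + (iteratedDeriv 2 f (g w) * iteratedDeriv 3 g w))) * iteratedDeriv 1 g w) + ((((iteratedDeriv 3 f (g w) * iteratedDeriv 1 g w) * iteratedDeriv 1 g w) + (iteratedDeriv 2 f (g w) * iteratedDeriv 2 g w)) * iteratedDeriv 2 g w)) + (((((iteratedDeriv 3 f (g w) * iteratedDeriv 1 g w) * iteratedDeriv 1 g w) + (iteratedDeriv 2 f (g w) * iteratedDeriv 2 g w)) * iteratedDeriv 2 g w) + ((iteratedDeriv 2 f (g w) * iteratedDeriv 1 g w) * iteratedDeriv 3 g w))) + ((((((iteratedDeriv 3 f (g w) * iteratedDeriv 1 g w) * iteratedDeriv 1 g w) + (iteratedDeriv 2 f (g w) * iteratedDeriv 2 g w)) * iteratedDeriv 2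 g w) + ((iteratedDeriv 2 f (g w) * iteratedDeriv 1 g w) * iteratedDeriv 3 g w)) + (((iteratedDeriv 2 f (g w) * iteratedDeriv 1 g w) * iteratedDeriv 3 g w) + (iteratedDeriv 1 f (g w) * iteratedDeriv 4 g w)))))
      (fun _ => (0:ℂ))
      (fun w hw => (((((((hPhid 3 w hw).mul (hgd 1 w hw)).mul (hgd 1 w hw)).add ((hPhid 2 w hw).mul (hgd 2 w hw))).mul (hgd 1 w hw)).add (((hPhid 2 w hw).mul (hgd 1 w hw)).mul (hgd 2 w hw))).add ((((hPhid 2 w hw).mul (hgd 1 w hw)).mul (hgd 2 w hw)).add ((hPhid 1 w hw).mul (hgd 3 w hw)))))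
      (fun w hw => hasDerivAt_const w _) e3
  have e5 : ∀ w ∈ U, (((((((((((((((iteratedDeriv 5 f (g w) * iteratedDeriv 1 g w) * iteratedDeriv 1 g w) + (iteratedDeriv 4 f (g w) * iteratedDeriv 2 g w)) * iteratedDeriv 1 g w) + ((iteratedDeriv 4 f (g w) * iteratedDeriv 1 g w) * iteratedDeriv 2 g w)) + (((iteratedDeriv 4 f (g w) * iteratedDeriv 1 g w) * iteratedDeriv 2 g w) + (iteratedDeriv 3 f (g w) * iteratedDeriv 3 g w))) * iteratedDeriv 1 g w) + ((((iteratedDeriv 4 f (g w) * iteratedDeriv 1 g w) * iteratedDeriv 1 g w) + (iteratedDeriv 3 f (g w) * iteratedDeriv 2 g w)) * iteratedDeriv 2 g w)) + (((((iteratedDeriv 4 f (g w) * iteratedDeriv 1 g w) * iteratedDeriv 1 g w) + (iteratedDeriv 3 f (g w) * iteratedDeriv 2 g w)) * iteratedDeriv 2 g w) + ((iteratedDeriv 3 f (g w) * iteratedDeriv 1 g w) * iteratedDeriv 3 g w))) + ((((((iteratedDeriv 4 f (g w) * iteratedDeriv 1 g w) * iteratedDeriv 1 g w) + (iteratedDeriv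 3 f (g w) * iteratedDeriv 2 g w)) * iteratedDeriv 2 g w) + ((iteratedDeriv 3 f (g w) * iteratedDeriv 1 g w) * iteratedDeriv 3 g w)) + (((iteratedDeriv 3 f (g w) * iteratedDeriv 1 g w) * iteratedDeriv 3 g w) + (iteratedDeriv 2 f (g w) * iteratedDeriv 4 g w)))) * iteratedDeriv 1 g w) + (((((((iteratedDeriv 4 f (g w) * iteratedDeriv 1 g w) * iteratedDeriv 1 g w) + (iteratedDeriv 3 f (g w) * iteratedDeriv 2 g w)) * iteratedDeriv 1 g w) + ((iteratedDeriv 3 f (g w) * iteratedDeriv 1 g w) * iteratedDeriv 2 g w)) + (((iteratedDeriv 3 f (g w) * iteratedDeriv 1 g w) * iteratedDeriv 2 g w) + (iteratedDeriv 2 f (g w) * iteratedDeriv 3 g w))) * iteratedDeriv 2 g w)) + ((((((((iteratedDeriv 4 f (g w) * iteratedDeriv 1 g w) * iteratedDeriv 1 g w) + (iteratedDeriv 3 f (g w) * iteratedDeriv 2 g w)) * iteratedDeriv 1 g w) + ((iteratedDeriv 3 f (g w) * iteratedDeriv 1 g w) * iteratedDeriv 2 g w)) + (((iteratedDeriv 3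 f (g w) * iteratedDeriv 1 g w) * iteratedDeriv 2 g w) + (iteratedDeriv 2 f (g w) * iteratedDeriv 3 g w))) * iteratedDeriv 2 g w) + ((((iteratedDeriv 3 f (g w) * iteratedDeriv 1 g w) * iteratedDeriv 1 g w) + (iteratedDeriv 2 f (g w) * iteratedDeriv 2 g w)) * iteratedDeriv 3 g w))) + (((((((((iteratedDeriv 4 f (g w) * iteratedDeriv 1 g w) * iteratedDeriv 1 g w) + (iteratedDeriv 3 f (g w) * iteratedDeriv 2 g w)) * iteratedDeriv 1 g w) + ((iteratedDeriv 3 f (g w) * iteratedDeriv 1 g w) * iteratedDeriv 2 g w)) + (((iteratedDeriv 3 f (g w) * iteratedDeriv 1 g w) * iteratedDeriv 2 g w) + (iteratedDeriv 2 f (g w) * iteratedDeriv 3 g w))) * iteratedDeriv 2 g w) + ((((iteratedDeriv 3 f (g w) * iteratedDeriv 1 g w) * iteratedDeriv 1 g w) + (iteratedDeriv 2 f (g w) * iteratedDeriv 2 g w)) * iteratedDeriv 3 g w)) + (((((iteratedDeriv 3 f (g w) * iteratedDeriv 1 g w) * iteratedDeriv 1 g w) + (iteratedDeriv 2 f (g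 w) * iteratedDeriv 2 g w)) * iteratedDeriv 3 g w) + ((iteratedDeriv 2 f (g w) * iteratedDeriv 1 g w) * iteratedDeriv 4 g w)))) + ((((((((((iteratedDeriv 4 f (g w) * iteratedDeriv 1 g w) * iteratedDeriv 1 g w) + (iteratedDeriv 3 f (g w) * iteratedDeriv 2 g w)) * iteratedDeriv 1 g w) + ((iteratedDeriv 3 f (g w) * iteratedDeriv 1 g w) * iteratedDeriv 2 g w)) + (((iteratedDeriv 3 f (g w) * iteratedDeriv 1 g w) * iteratedDeriv 2 g w) + (iteratedDeriv 2 f (g w) * iteratedDeriv 3 g w))) * iteratedDeriv 2 g w) + ((((iteratedDeriv 3 f (g w) * iteratedDeriv 1 g w) * iteratedDeriv 1 g w) + (iteratedDeriv 2 f (g w) * iteratedDeriv 2 g w)) * iteratedDeriv 3 g w)) + (((((iteratedDeriv 3 f (g w) * iteratedDeriv 1 g w) * iteratedDeriv 1 g w) + (iteratedDeriv 2 f (g w) * iteratedDeriv 2 g w)) * iteratedDeriv 3 g w) + ((iteratedDeriv 2 f (g w) * iteratedDeriv 1 g w) * iteratedDeriv 4 g w))) + ((((((iteratedDeriv 3 f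 (g w) * iteratedDeriv 1 g w) * iteratedDeriv 1 g w) + (iteratedDeriv 2 f (g w) * iteratedDeriv 2 g w)) * iteratedDeriv 3 g w) + ((iteratedDeriv 2 f (g w) * iteratedDeriv 1 g w) * iteratedDeriv 4 g w)) + (((iteratedDeriv 2 f (g w) * iteratedDeriv 1 g w) * iteratedDeriv 4 g w) + (iteratedDeriv 1 f (g w) * iteratedDeriv 5 g w))))) = 0 := by
    refine hstep (fun w => ((((((((((iteratedDeriv 4 f (g w) * iteratedDeriv 1 g w) * iteratedDeriv 1 g w) + (iteratedDeriv 3 f (g w) * iteratedDeriv 2 g w)) * iteratedDeriv 1 g w) + ((iteratedDeriv 3 f (g w) * iteratedDeriv 1 g w) * iteratedDeriv 2 g w)) + (((iteratedDeriv 3 f (g w) * iteratedDeriv 1 g w) * iteratedDeriv 2 g w) + (iteratedDeriv 2 f (g w) * iteratedDeriv 3 g w))) * iteratedDeriv 1 g w) + ((((iteratedDeriv 3 f (g w) * iteratedDeriv 1 g w) * iteratedDeriv 1 g w) + (iteratedDeriv 2 f (g w) * iteratedDeriv 2 g w)) * iteratedDeriv 2 g w)) + (((((iteratedDeriv 3 f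 (g w) * iteratedDeriv 1 g w) * iteratedDeriv 1 g w) + (iteratedDeriv 2 f (g w) * iteratedDeriv 2 g w)) * iteratedDeriv 2 g w) + ((iteratedDeriv 2 f (g w) * iteratedDeriv 1 g w) * iteratedDeriv 3 g w))) + ((((((iteratedDeriv 3 f (g w) * iteratedDeriv 1 g w) * iteratedDeriv 1 g w) + (iteratedDeriv 2 f (g w) * iteratedDeriv 2 g w)) * iteratedDeriv 2 g w) + ((iteratedDeriv 2 f (g w) * iteratedDeriv 1 g w) * iteratedDeriv 3 g w)) + (((iteratedDeriv 2 f (g w) * iteratedDeriv 1 g w) * iteratedDeriv 3 g w) + (iteratedDeriv 1 f (g w) * iteratedDeriv 4 g w))))) (fun _ => (0:ℂ))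
      (fun w => (((((((((((((((iteratedDeriv 5 f (g w) * iteratedDeriv 1 g w) * iteratedDeriv 1 g w) + (iteratedDeriv 4 f (g w) * iteratedDeriv 2 g w)) * iteratedDeriv 1 g w) + ((iteratedDeriv 4 f (g w) * iteratedDeriv 1 g w) * iteratedDeriv 2 g w)) + (((iteratedDeriv 4 f (g w) * iteratedDeriv 1 g w) * iteratedDeriv 2 g w) + (iteratedDeriv 3 f (g w) * iteratedDeriv 3 g w))) * iteratedDeriv 1 g w) + ((((iteratedDeriv 4 f (g w) * iteratedDeriv 1 g w) * iteratedDeriv 1 g w) + (iteratedDeriv 3 f (g w) * iteratedDeriv 2 g w)) * iteratedDeriv 2 g w)) + (((((iteratedDeriv 4 f (g w) * iteratedDeriv 1 g w) * iteratedDeriv 1 g w) + (iteratedDeriv 3 f (g w) * iteratedDeriv 2 g w)) * iteratedDeriv 2 g w) + ((iteratedDeriv 3 f (g w) * iteratedDeriv 1 g w) * iteratedDeriv 3 g w))) + ((((((iteratedDeriv 4 f (g w) * iteratedDeriv 1 g w) * iteratedDeriv 1 g w) + (iteratedDeriv 3 f (g w) * iteratedDeriv 2 g w)) * iteratedDeriv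 2 g w) + ((iteratedDeriv 3 f (g w) * iteratedDeriv 1 g w) * iteratedDeriv 3 g w)) + (((iteratedDeriv 3 f (g w) * iteratedDeriv 1 g w) * iteratedDeriv 3 g w) + (iteratedDeriv 2 f (g w) * iteratedDeriv 4 g w)))) * iteratedDeriv 1 g w) + (((((((iteratedDeriv 4 f (g w) * iteratedDeriv 1 g w) * iteratedDeriv 1 g w) + (iteratedDeriv 3 f (g w) * iteratedDeriv 2 g w)) * iteratedDeriv 1 g w) + ((iteratedDeriv 3 f (g w) * iteratedDeriv 1 g w) * iteratedDeriv 2 g w)) + (((iteratedDeriv 3 f (g w) * iteratedDeriv 1 g w) * iteratedDeriv 2 g w) + (iteratedDeriv 2 f (g w) * iteratedDeriv 3 g w))) * iteratedDeriv 2 g w)) + ((((((((iteratedDeriv 4 f (g w) * iteratedDeriv 1 g w) * iteratedDeriv 1 g w) + (iteratedDeriv 3 f (g w) * iteratedDeriv 2 g w)) * iteratedDeriv 1 g w) + ((iteratedDeriv 3 f (g w) * iteratedDeriv 1 g w) * iteratedDeriv 2 g w)) + (((iteratedDeriv 3 f (g w) * iteratedDeriv 1 g w) * iteratedDeriv 2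 g w) + (iteratedDeriv 2 f (g w) * iteratedDeriv 3 g w))) * iteratedDeriv 2 g w) + ((((iteratedDeriv 3 f (g w) * iteratedDeriv 1 g w) * iteratedDeriv 1 g w) + (iteratedDeriv 2 f (g w) * iteratedDeriv 2 g w)) * iteratedDeriv 3 g w))) + (((((((((iteratedDeriv 4 f (g w) * iteratedDeriv 1 g w) * iteratedDeriv 1 g w) + (iteratedDeriv 3 f (g w) * iteratedDeriv 2 g w)) * iteratedDeriv 1 g w) + ((iteratedDeriv 3 f (g w) * iteratedDeriv 1 g w) * iteratedDeriv 2 g w)) + (((iteratedDeriv 3 f (g w) * iteratedDeriv 1 g w) * iteratedDeriv 2 g w) + (iteratedDeriv 2 f (g w) * iteratedDeriv 3 g w))) * iteratedDeriv 2 g w) + ((((iteratedDeriv 3 f (g w) * iteratedDeriv 1 g w) * iteratedDeriv 1 g w) + (iteratedDeriv 2 f (g w) * iteratedDeriv 2 g w)) * iteratedDeriv 3 g w)) + (((((iteratedDeriv 3 f (g w) * iteratedDeriv 1 g w) * iteratedDeriv 1 g w) + (iteratedDeriv 2 f (g w) * iteratedDeriv 2 g w)) * iteratedDeriv 3 g w)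 + ((iteratedDeriv 2 f (g w) * iteratedDeriv 1 g w) * iteratedDeriv 4 g w)))) + ((((((((((iteratedDeriv 4 f (g w) * iteratedDeriv 1 g w) * iteratedDeriv 1 g w) + (iteratedDeriv 3 f (g w) * iteratedDeriv 2 g w)) * iteratedDeriv 1 g w) + ((iteratedDeriv 3 f (g w) * iteratedDeriv 1 g w) * iteratedDeriv 2 g w)) + (((iteratedDeriv 3 f (g w) * iteratedDeriv 1 g w) * iteratedDeriv 2 g w) + (iteratedDeriv 2 f (g w) * iteratedDeriv 3 g w))) * iteratedDeriv 2 g w) + ((((iteratedDeriv 3 f (g w) * iteratedDeriv 1 g w) * iteratedDeriv 1 g w) + (iteratedDeriv 2 f (g w) * iteratedDeriv 2 g w)) * iteratedDeriv 3 g w)) + (((((iteratedDeriv 3 f (g w) * iteratedDeriv 1 g w) * iteratedDeriv 1 g w) + (iteratedDeriv 2 f (g w) * iteratedDeriv 2 g w)) * iteratedDeriv 3 g w) + ((iteratedDeriv 2 f (g w) * iteratedDeriv 1 g w) * iteratedDeriv 4 g w))) + ((((((iteratedDeriv 3 f (g w) * iteratedDeriv 1 g w) * iteratedDeriv 1 g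 w) + (iteratedDeriv 2 f (g w) * iteratedDeriv 2 g w)) * iteratedDeriv 3 g w) + ((iteratedDeriv 2 f (g w) * iteratedDeriv 1 g w) * iteratedDeriv 4 g w)) + (((iteratedDeriv 2 f (g w) * iteratedDeriv 1 g w) * iteratedDeriv 4 g w) + (iteratedDeriv 1 f (g w) * iteratedDeriv 5 g w))))))
      (fun _ => (0:ℂ))
      (fun w hw => (((((((((((hPhid 4 w hw).mul (hgd 1 w hw)).mul (hgd 1 w hw)).add ((hPhid 3 w hw).mul (hgd 2 w hw))).mul (hgd 1 w hw)).add (((hPhid 3 w hw).mul (hgd 1 w hw)).mul (hgd 2 w hw))).add ((((hPhid 3 w hw).mul (hgd 1 w hw)).mul (hgd 2 w hw)).add ((hPhid 2 w hw).mul (hgd 3 w hw)))).mul (hgd 1 w hw)).add (((((hPhid 3 w hw).mul (hgd 1 w hw)).mul (hgd 1 w hw)).add ((hPhid 2 w hw).mul (hgd 2 w hw))).mul (hgd 2 w hw))).add ((((((hPhid 3 w hw).mul (hgd 1 w hw)).mul (hgd 1 w hw)).add ((hPhid 2 w hw).mul (hgd 2 w hw))).mul (hgd 2 w hw)).add (((hPhid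 2 w hw).mul (hgd 1 w hw)).mul (hgd 3 w hw)))).add (((((((hPhid 3 w hw).mul (hgd 1 w hw)).mul (hgd 1 w hw)).add ((hPhid 2 w hw).mul (hgd 2 w hw))).mul (hgd 2 w hw)).add (((hPhid 2 w hw).mul (hgd 1 w hw)).mul (hgd 3 w hw))).add ((((hPhid 2 w hw).mul (hgd 1 w hw)).mul (hgd 3 w hw)).add ((hPhid 1 w hw).mul (hgd 4 w hw))))))
      (fun w hw => hasDerivAt_const w _) e4
  -- evaluate everything at 0
  have hphi1 : iteratedDeriv 1 f 0 = 1 := by rw [iteratedDeriv_one]; exact hf1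
  have hg1 : iteratedDeriv 1 g 0 = 1 := by rw [hAd 1, hA1]; norm_num
  have hg2 : iteratedDeriv 2 g 0 = 2 * A 2 := by rw [hAd 2]; norm_num [Nat.factorial]
  have hg3 : iteratedDeriv 3 g 0 = 6 * A 3 := by rw [hAd 3]; norm_num [Nat.factorial]
  have hg4 : iteratedDeriv 4 g 0 = 24 * A 4 := by rw [hAd 4]; norm_num [Nat.factorial]
  have hg5 : iteratedDeriv 5 g 0 = 120 * A 5 := by rw [hAd 5]; norm_num [Nat.factorial]
  have E2 := e2 0 hU0
  have E3 := e3 0 hU0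
  have E4 := e4 0 hU0
  have E5 := e5 0 hU0
  rw [hg0, hphi1, hg1, hg2] at E2
  rw [hg0, hphi1, hg1, hg2, hg3] at E3
  rw [hg0, hphi1, hg1, hg2, hg3, hg4] at E4
  rw [hg0, hphi1, hg1, hg2, hg3, hg4, hg5] at E5
  have ha2 : iteratedDeriv 2 f 0 = -2 * A 2 := by linear_combination E2
  have ha3 : iteratedDeriv 3 f 0 = 12 * A 2 ^ 2 - 6 * A 3 := by
    linear_combination E3 - 6 * A 2 * ha2
  have ha4 : iteratedDeriv 4 f 0 = -120 * A 2 ^ 3 + 120 * A 2 * A 3 - 24 * A 4 := by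
    linear_combination E4 - 12 * A 2 * ha3 - (12 * A 2 ^ 2 + 24 * A 3) * ha2
  have ha5 : iteratedDeriv 5 f 0
      = 1680 * A 2 ^ 4 - 2520 * A 2 ^ 2 * A 3 + 720 * A 2 * A 4 + 360 * A 3 ^ 2
        - 120 * A 5 := by
    linear_combination E5 - 20 * A 2 * ha4 - (60 * A 2 ^ 2 + 60 * A 3) * ha3
      - (120 * A 2 * A 3 + 120 * A 4) * ha2
  have hv1 := hcv 1
  have hv2 := hcv 2
  have hv3 := hcv 3
  have hv4 := hcv 4
  norm_num [Nat.factorial] at hv1 hv2 hv3 hv4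
  have hc1 : c 1 = -4 * A 2 := by linear_combination hv1 + 2 * ha2
  have hc2 : c 2 = 18 * A 2 ^ 2 - 9 * A 3 := by
    linear_combination (1/2) * hv2 + (3/2) * ha3
  have hc3 : c 3 = -80 * A 2 ^ 3 + 80 * A 2 * A 3 - 16 * A 4 := by
    linear_combination (1/6) * hv3 + (2/3) * ha4
  have hc4 : c 4 = 350 * A 2 ^ 4 - 525 * A 2 ^ 2 * A 3 + 150 * A 2 * A 4
      + 75 * A 3 ^ 2 - 25 * A 5 := by
    linear_combination (1/24) * hv4 + (5/24) * ha5
  rw [hc1, hc2, hc3, hc4]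
  ring
end

section
/- The function f*(z) = z + (1/8)z⁴ + (2/49)z⁷ + ... defined by (z f*'(z))' = (1+z³)/(1−z³) has coefficients a₂ = a₃ = 0, a₄ = 1/8, a₅ = 0, its inverse coefficients satisfy A₂ = A₃ = 0, A₄ = −1/8, A₅ = 0, and hence |H₃(1)(f*⁻¹)| = 1/64. -/
open Metric

section helpers
open FormalMultilinearSeries Filter Asymptotics Topology

lemma buildFPS {c : ℕ → ℂ} {h : ℂ → ℂ} {r : NNReal} (hr : 0 < r)
    (hs : ∀ z : ℂ, ‖z‖ < r → HasSum (fun n => c n * z ^ n) (h z)) :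
    HasFPowerSeriesOnBall h (ofScalars ℂ c) 0 r := by
  constructor
  · apply ENNReal.le_of_forall_nnreal_lt
    intro r' hr'
    apply le_radius_of_summable
    have hlt : ‖((r' : ℝ) : ℂ)‖ < r := by
      simp only [Complex.norm_real, Real.norm_eq_abs, abs_of_nonneg r'.coe_nonneg]
      exact_mod_cast hr'
    have hsum : Summable fun n => c n * (((r' : ℝ) : ℂ)) ^ n := (hs _ hlt).summable
    have h2 := summable_norm_iff.mpr hsum
    apply Summable.congr h2
    intro n
    rw [ofScalars_norm, norm_mul, norm_pow]
    simp [Complex.norm_real, Real.norm_eq_abs, abs_of_nonneg r'.coe_nonneg]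
  · exact_mod_cast hr
  · intro y hy
    rw [EMetric.mem_ball, edist_zero_right] at hy
    have hy' : ‖y‖ < r := by
      rw [← coe_nnnorm]
      exact_mod_cast hy
    simpa only [ofScalars_apply_eq, smul_eq_mul, zero_add] using hs y hy'

lemma coeff_unique {c d : ℕ → ℂ} {h : ℂ → ℂ} {r r' : NNReal} (hr : 0 < r) (hr' : 0 < r')
    (hs : ∀ z : ℂ, ‖z‖ < r → HasSum (fun n => c n * z ^ n) (h z))
    (hs' : ∀ z : ℂ, ‖z‖ < r' → HasSum (fun n => d n * z ^ n) (h z)) : c = d := by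
  have h1 := (buildFPS hr hs).hasFPowerSeriesAt
  have h2 := (buildFPS hr' hs').hasFPowerSeriesAt
  exact ofScalars_series_injective ℂ ℂ (h1.eq_formalMultilinearSeries h2)

lemma hasSum_zmul_deriv {c : ℕ → ℂ} {h : ℂ → ℂ} {r : NNReal}
    (H : HasFPowerSeriesOnBall h (ofScalars ℂ c) 0 r) {z : ℂ} (hz : ‖z‖ < r) :
    HasSum (fun n : ℕ => ((n : ℂ) + 1) * c (n + 1) * z ^ (n + 1)) (z * deriv h z) := by
  have hz' : z ∈ Metric.eball (0 : ℂ) r := by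
    rw [Metric.mem_eball, edist_zero_right]
    exact_mod_cast (by rw [← coe_nnnorm] at hz; exact_mod_cast hz : ‖z‖₊ < r)
  have h1 := (H.fderiv).hasSum hz'
  have h2 := h1.mapL (ContinuousLinearMap.apply ℂ ℂ z)
  simp only [ContinuousLinearMap.apply_apply] at h2
  have h3 : ∀ n : ℕ, ((ofScalars ℂ c).derivSeries n fun _ => z) z
      = ((n : ℂ) + 1) * c (n + 1) * z ^ (n + 1) := by
    intro n
    rw [derivSeries_apply_diag, ofScalars_apply_eq]
    push_cast
    simp [smul_eq_mul]
    ring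
  have h4 : (fderiv ℂ h (0 + z)) z = z * deriv h z := by
    rw [zero_add, fderiv_eq_smul_deriv, smul_eq_mul]
  rw [h4] at h2
  exact HasSum.congr_fun h2 fun n => (h3 n).symm

lemma hasSum_shift {t : ℕ → ℂ} {S : ℂ} (h0 : t 0 = 0) (h : HasSum (fun n => t (n + 1)) S) :
    HasSum t S := by
  have hi : Function.Injective (fun n : ℕ => n + 1) := fun a b h => by simp only [] at h; omega
  rw [← Function.Injective.hasSum_iff hi ?_]
  · exact h
  · intro x hx
    have : x = 0 := by
      by_contra h'
      exact hx ⟨x - 1, show x - 1 + 1 = x by omega⟩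
    rw [this, h0]

noncomputable def ee : ℕ → ℂ := fun n => if n % 3 = 1 then (if n = 1 then 1 else 2) else 0

lemma hasSum_ee {z : ℂ} (hz : ‖z‖ < 1) :
    HasSum (fun n => ee n * z ^ n) (z * ((1 + z ^ 3) / (1 - z ^ 3))) := by
  have hz3 : ‖z ^ 3‖ < 1 := by
    rw [norm_pow]
    exact pow_lt_one₀ (norm_nonneg z) hz (by norm_num)
  have hne : (1 : ℂ) - z ^ 3 ≠ 0 := by
    intro h
    have : z ^ 3 = 1 := by linear_combination -h
    rw [this] at hz3; simp at hz3
  have geo := (hasSum_geometric_of_norm_lt_one hz3).mul_left (2 * z)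
  have delta : HasSum (fun k : ℕ => if k = 0 then z else 0) z := hasSum_ite_eq 0 z
  have g2 := geo.sub delta
  have g3 : HasSum (fun k : ℕ => ee (3 * k + 1) * z ^ (3 * k + 1))
      (2 * z * (1 - z ^ 3)⁻¹ - z) := by
    apply HasSum.congr_fun g2
    intro k
    rcases Nat.eq_zero_or_pos k with hk | hk
    · subst hk; simp [ee]; ring
    · have h1 : 3 * k + 1 ≠ 1 := by omega
      have h2 : (3 * k + 1) % 3 = 1 := by omega
      have h3 : k ≠ 0 := by omega
      simp only [ee, h1, h2, if_true, if_false, reduceIte, h3]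
      rw [pow_add, pow_mul]
      ring
  have hi : Function.Injective (fun k : ℕ => 3 * k + 1) := fun a b h => by simp only [] at h; omega
  rw [show (fun k : ℕ => ee (3 * k + 1) * z ^ (3 * k + 1))
      = (fun n => ee n * z ^ n) ∘ (fun k : ℕ => 3 * k + 1) from rfl] at g3
  rw [Function.Injective.hasSum_iff hi ?_] at g3
  · have hval : 2 * z * (1 - z ^ 3)⁻¹ - z = z * ((1 + z ^ 3) / (1 - z ^ 3)) := by
      field_simp
      ring
    rwa [hval] at g3
  · intro n hn
    have : n % 3 ≠ 1 := by
      intro h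
      exact hn ⟨n / 3, show 3 * (n / 3) + 1 = n by omega⟩
    simp [ee, this]

lemma ode_coeffs {f : ℂ → ℂ} {a : ℕ → ℂ}
    (hf : AnalyticOnNhd ℂ f (ball (0:ℂ) 1))
    (hfa : ∀ z ∈ ball (0:ℂ) 1, HasSum (fun n => a n * z ^ n) (f z))
    (hode : ∀ z ∈ ball (0:ℂ) 1,
      deriv f z + z * deriv (deriv f) z = (1 + z ^ 3) / (1 - z ^ 3)) :
    ∀ n : ℕ, (n : ℂ) ^ 2 * a n = ee n := by
  have hmem : ∀ z : ℂ, ‖z‖ < (1 : NNReal) → z ∈ ball (0:ℂ) 1 := by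
    intro z hz
    simpa [mem_ball, dist_zero_right] using (by exact_mod_cast hz : ‖z‖ < 1)
  have HF : HasFPowerSeriesOnBall f (FormalMultilinearSeries.ofScalars ℂ a) 0 1 :=
    buildFPS one_pos (fun z hz => hfa z (hmem z hz))
  set M : ℂ → ℂ := fun z => z * deriv f z with hMdef
  have hM : ∀ z : ℂ, ‖z‖ < (1 : NNReal) → HasSum (fun n : ℕ => ((n : ℂ) * a n) * z ^ n) (M z) := by
    intro z hz
    apply hasSum_shift (by simp)
    have := hasSum_zmul_deriv HF hz
    apply HasSum.congr_fun this
    intro n; push_cast; ring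
  have HM : HasFPowerSeriesOnBall M
      (FormalMultilinearSeries.ofScalars ℂ (fun n => (n : ℂ) * a n)) 0 1 :=
    buildFPS one_pos hM
  have hT : ∀ z : ℂ, ‖z‖ < (1 : NNReal) →
      HasSum (fun n : ℕ => ((n : ℂ) ^ 2 * a n) * z ^ n) (z * ((1 + z ^ 3) / (1 - z ^ 3))) := by
    intro z hz
    have h5 := hasSum_zmul_deriv HM hz
    have hdM : deriv M z = (1 + z ^ 3) / (1 - z ^ 3) := by
      have hdf : DifferentiableAt ℂ (deriv f) z :=
        ((hf.deriv) z (hmem z hz)).differentiableAt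
      have hd : deriv M z = deriv f z + z * deriv (deriv f) z := by
        rw [hMdef]
        rw [deriv_fun_mul differentiableAt_fun_id hdf]
        simp
      rw [hd]
      exact hode z (hmem z hz)
    rw [hdM] at h5
    apply hasSum_shift (by simp)
    apply HasSum.congr_fun h5
    intro n; push_cast; ring
  have key : (fun n : ℕ => (n : ℂ) ^ 2 * a n) = ee := by
    apply coeff_unique one_pos one_pos hT
    intro z hz
    exact hasSum_ee (by exact_mod_cast hz)
  intro n
  exact congrFun key n

lemma tailO {c : ℕ → ℂ} {h : ℂ → ℂ} {r : NNReal}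
    (H : HasFPowerSeriesOnBall h (FormalMultilinearSeries.ofScalars ℂ c) 0 r) (n : ℕ) :
    (fun y : ℂ => h y - ∑ k ∈ Finset.range n, c k * y ^ k) =O[𝓝 0] fun y => ‖y‖ ^ n := by
  have := H.hasFPowerSeriesAt.isBigO_sub_partialSum_pow n
  simp only [FormalMultilinearSeries.partialSum, ofScalars_apply_eq, smul_eq_mul,
    zero_add] at this
  exact this

lemma powO {m k : ℕ} (hk : k ≤ m) : (fun w : ℂ => ‖w‖ ^ m) =O[𝓝 0] fun w => ‖w‖ ^ k := by
  rw [isBigO_iff]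
  refine ⟨1, ?_⟩
  filter_upwards [Metric.ball_mem_nhds (0:ℂ) one_pos] with w hw
  rw [mem_ball, dist_zero_right] at hw
  rw [norm_pow, norm_pow, norm_norm, one_mul]
  exact pow_le_pow_of_le_one (norm_nonneg w) hw.le hk

lemma wpowO (k : ℕ) : (fun w : ℂ => w ^ k) =O[𝓝 0] fun w => ‖w‖ ^ k :=
  isBigO_of_le _ fun w => by rw [norm_pow, norm_pow, norm_norm]

lemma coeffZero {G : ℂ → ℂ} (hG : ContinuousAt G 0) {n : ℕ}
    (H : (fun w => G w * w ^ n) =O[𝓝 0] fun w => ‖w‖ ^ (n + 1)) : G 0 = 0 := by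
  rcases isBigO_iff.mp H with ⟨C, hC⟩
  have hb : ∀ᶠ w in 𝓝[≠] (0:ℂ), ‖G w‖ ≤ C * ‖w‖ := by
    filter_upwards [nhdsWithin_le_nhds hC, self_mem_nhdsWithin] with w hw hw0
    have hwpos : (0:ℝ) < ‖w‖ ^ n := pow_pos (norm_pos_iff.mpr hw0) n
    rw [norm_mul, norm_pow, norm_pow, norm_norm] at hw
    have hx : ‖G w‖ * ‖w‖ ^ n ≤ (C * ‖w‖) * ‖w‖ ^ n := by
      calc ‖G w‖ * ‖w‖ ^ n ≤ C * ‖w‖ ^ (n + 1) := hw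
      _ = (C * ‖w‖) * ‖w‖ ^ n := by ring
    exact le_of_mul_le_mul_right hx hwpos
  have h0 : Filter.Tendsto G (𝓝[≠] (0:ℂ)) (𝓝 0) := by
    apply squeeze_zero_norm' hb
    have : Filter.Tendsto (fun w : ℂ => C * ‖w‖) (𝓝 0) (𝓝 (C * ‖(0:ℂ)‖)) :=
      (continuous_norm.tendsto 0).const_mul C
    simpa using this.mono_left nhdsWithin_le_nhds
  have h1 : Filter.Tendsto G (𝓝[≠] (0:ℂ)) (𝓝 (G 0)) :=
    hG.tendsto.mono_left nhdsWithin_le_nhds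
  exact tendsto_nhds_unique h1 h0

lemma mulO {u v : ℂ → ℂ} {i j k : ℕ} (hk : i + j = k)
    (hu : u =O[𝓝 0] fun w : ℂ => ‖w‖ ^ i) (hv : v =O[𝓝 0] fun w : ℂ => ‖w‖ ^ j) :
    (fun w => u w * v w) =O[𝓝 0] fun w : ℂ => ‖w‖ ^ k :=
  (hu.mul hv).congr_right fun w => by rw [← pow_add, hk]

lemma powO2 {u : ℂ → ℂ} {i n k : ℕ} (hk : i * n = k)
    (hu : u =O[𝓝 0] fun w : ℂ => ‖w‖ ^ i) :
    (fun w => u w ^ n) =O[𝓝 0] fun w : ℂ => ‖w‖ ^ k :=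
  (hu.pow n).congr_right fun w => by rw [← pow_mul, hk]

end helpers

open FormalMultilinearSeries Filter Asymptotics Topology

/-- The extremal function `f⋆` with `(z f⋆'(z))' = (1+z³)/(1−z³)`: its coefficients,
inverse coefficients, and Hankel determinant value. -/
theorem stmt_14 (f g : ℂ → ℂ) (a A : ℕ → ℂ)
    (hf : AnalyticOnNhd ℂ f (ball (0:ℂ) 1))
    (ha0 : a 0 = 0) (ha1 : a 1 = 1)
    (hfa : ∀ z ∈ ball (0:ℂ) 1, HasSum (fun n => a n * z ^ n) (f z))
    (hode : ∀ z ∈ ball (0:ℂ) 1,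
      deriv f z + z * deriv (deriv f) z = (1 + z ^ 3) / (1 - z ^ 3))
    (hA0 : A 0 = 0) (hA1 : A 1 = 1)
    (hgA : ∀ w : ℂ, ‖w‖ ≤ 1/4 → HasSum (fun n => A n * w ^ n) (g w))
    (hgball : ∀ w : ℂ, ‖w‖ ≤ 1/4 → g w ∈ ball (0:ℂ) 1)
    (hinv : ∀ w : ℂ, ‖w‖ ≤ 1/4 → f (g w) = w) :
    a 2 = 0 ∧ a 3 = 0 ∧ a 4 = 1/8 ∧ a 5 = 0 ∧
    A 2 = 0 ∧ A 3 = 0 ∧ A 4 = -1/8 ∧ A 5 = 0 ∧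
    ‖2 * A 2 * A 3 * A 4 - A 3 ^ 3 - A 4 ^ 2 + A 3 * A 5 - A 2 ^ 2 * A 5‖
      = 1 / 64 := by
  have hee := ode_coeffs hf hfa hode
  have ha2 : a 2 = 0 := by
    have := hee 2; norm_num [ee] at this; exact this
  have ha3 : a 3 = 0 := by
    have := hee 3; norm_num [ee] at this; exact this
  have ha4 : a 4 = 1/8 := by
    have := hee 4; norm_num [ee] at this; linear_combination this / 16
  have ha5 : a 5 = 0 := by
    have := hee 5; norm_num [ee] at this; exact this
  -- inverse part
  have hq : (0 : NNReal) < 1/4 := by norm_num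
  have hcoe : ((1/4 : NNReal) : ℝ) = 1/4 := by norm_num
  have HG : HasFPowerSeriesOnBall g (FormalMultilinearSeries.ofScalars ℂ A) 0 ((1/4 : NNReal) : ENNReal) :=
    buildFPS hq (fun w hw => hgA w (by rw [hcoe] at hw; exact hw.le))
  have hg0 : g 0 = 0 := by
    have h1 := hgA 0 (by norm_num)
    have h2 : HasSum (fun n : ℕ => A n * (0:ℂ) ^ n) (A 0) := by
      have := hasSum_single (f := fun n : ℕ => A n * (0:ℂ) ^ n) 0
        (fun b hb => by simp [zero_pow hb])
      simpa using this
    rw [h1.unique h2, hA0]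
  have hgt : Filter.Tendsto g (𝓝 0) (𝓝 0) := by
    have := HG.hasFPowerSeriesAt.continuousAt.tendsto
    rwa [hg0] at this
  have HF : HasFPowerSeriesOnBall f (FormalMultilinearSeries.ofScalars ℂ a) 0 1 :=
    buildFPS one_pos (fun z hz => hfa z
      (by simpa [mem_ball, dist_zero_right] using (by exact_mod_cast hz : ‖z‖ < 1)))
  have tf6 : (fun z : ℂ => f z - (z + (1/8) * z ^ 4)) =O[𝓝 0] fun z => ‖z‖ ^ 6 :=
    (tailO HF 6).congr_left fun z => by
      simp [Finset.sum_range_succ, ha0, ha1, ha2, ha3, ha4, ha5]; try ring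
  have t1 : (fun w : ℂ => g w) =O[𝓝 0] fun w => ‖w‖ ^ 1 :=
    (tailO HG 1).congr_left fun w => by simp [Finset.sum_range_succ, hA0]
  have t2 : (fun w : ℂ => g w - w) =O[𝓝 0] fun w => ‖w‖ ^ 2 :=
    (tailO HG 2).congr_left fun w => by simp [Finset.sum_range_succ, hA0, hA1]
  have t3 : (fun w : ℂ => g w - w - A 2 * w ^ 2) =O[𝓝 0] fun w => ‖w‖ ^ 3 :=
    (tailO HG 3).congr_left fun w => by
      simp [Finset.sum_range_succ, hA0, hA1]; try ring
  have t6 : (fun w : ℂ => g w - w - A 2 * w ^ 2 - A 3 * w ^ 3 - A 4 * w ^ 4 - A 5 * w ^ 5)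
      =O[𝓝 0] fun w => ‖w‖ ^ 6 :=
    (tailO HG 6).congr_left fun w => by
      simp [Finset.sum_range_succ, hA0, hA1]; try ring
  have hgn6 : (fun w : ℂ => ‖g w‖ ^ 6) =O[𝓝 0] fun w => ‖w‖ ^ 6 :=
    (isBigO_norm_left.mpr (powO2 (by norm_num : 1 * 6 = 6) t1)).congr_left
      fun w => by rw [norm_pow]
  have hcomp : (fun w : ℂ => f (g w) - (g w + (1/8) * (g w) ^ 4)) =O[𝓝 0] fun w => ‖w‖ ^ 6 :=
    ((tf6.comp_tendsto hgt).congr_left fun w => rfl).trans hgn6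
  have hev : ∀ᶠ w in 𝓝 (0:ℂ), f (g w) = w := by
    filter_upwards [Metric.closedBall_mem_nhds (0:ℂ) (by norm_num : (0:ℝ) < 1/4)] with w hw
    exact hinv w (by rwa [Metric.mem_closedBall, dist_zero_right] at hw)
  have h1 : (fun w : ℂ => w - g w - (1/8) * (g w) ^ 4) =O[𝓝 0] fun w => ‖w‖ ^ 6 :=
    hcomp.congr' (hev.mono fun w hw => by simp only [hw]; ring) Filter.EventuallyEq.rfl
  have T1 : (fun w : ℂ => w ^ 3 * (g w - w - A 2 * w ^ 2)) =O[𝓝 0] fun w => ‖w‖ ^ 6 :=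
    mulO (by norm_num) (wpowO 3) t3
  have T2 : (fun w : ℂ => w ^ 2 * (g w - w) ^ 2) =O[𝓝 0] fun w => ‖w‖ ^ 6 :=
    mulO (by norm_num : 2 + 4 = 6) (wpowO 2) (powO2 (by norm_num : 2 * 2 = 4) t2)
  have T3 : (fun w : ℂ => w ^ 1 * (g w - w) ^ 3) =O[𝓝 0] fun w => ‖w‖ ^ 6 :=
    (mulO (by norm_num : 1 + 6 = 7) (wpowO 1) (powO2 (by norm_num : 2 * 3 = 6) t2)).trans
      (powO (by norm_num))
  have T4 : (fun w : ℂ => (g w - w) ^ 4) =O[𝓝 0] fun w => ‖w‖ ^ 6 :=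
    (powO2 (by norm_num : 2 * 4 = 8) t2).trans (powO (by norm_num))
  have hG4 : (fun w : ℂ => (g w) ^ 4 - w ^ 4 - 4 * A 2 * w ^ 5) =O[𝓝 0] fun w => ‖w‖ ^ 6 := by
    have hsum := ((T1.const_mul_left 4).add (T2.const_mul_left 6)).add
      ((T3.const_mul_left 4).add T4)
    exact hsum.congr_left fun w => by ring
  have hpoly : (fun w : ℂ => -(A 2 * w ^ 2) - A 3 * w ^ 3 - (A 4 + 1/8) * w ^ 4
      - (A 5 + A 2 / 2) * w ^ 5) =O[𝓝 0] fun w => ‖w‖ ^ 6 := by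
    have := (h1.add t6).add (hG4.const_mul_left (1/8))
    exact this.congr_left fun w => by ring
  have hA2 : A 2 = 0 := by
    have hGc : ContinuousAt (fun w : ℂ =>
        -(A 2) - A 3 * w - (A 4 + 1/8) * w ^ 2 - (A 5 + A 2 / 2) * w ^ 3) 0 := by fun_prop
    have H2 : (fun w : ℂ => (-(A 2) - A 3 * w - (A 4 + 1/8) * w ^ 2
        - (A 5 + A 2 / 2) * w ^ 3) * w ^ 2) =O[𝓝 0] fun w => ‖w‖ ^ (2 + 1) :=
      (hpoly.congr_left fun w => by ring).trans (powO (by norm_num))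
    have := coeffZero hGc H2
    simpa using this
  have hA3 : A 3 = 0 := by
    have hGc : ContinuousAt (fun w : ℂ => -(A 3) - (A 4 + 1/8) * w - A 5 * w ^ 2) 0 := by
      fun_prop
    have H2 : (fun w : ℂ => (-(A 3) - (A 4 + 1/8) * w - A 5 * w ^ 2) * w ^ 3)
        =O[𝓝 0] fun w => ‖w‖ ^ (3 + 1) :=
      (hpoly.congr_left fun w => by rw [hA2]; ring).trans (powO (by norm_num))
    have := coeffZero hGc H2
    simpa using this
  have hA4 : A 4 = -1/8 := by
    have hGc : ContinuousAt (fun w : ℂ => -(A 4 + 1/8) - A 5 * w) 0 := by fun_prop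
    have H2 : (fun w : ℂ => (-(A 4 + 1/8) - A 5 * w) * w ^ 4)
        =O[𝓝 0] fun w => ‖w‖ ^ (4 + 1) :=
      (hpoly.congr_left fun w => by rw [hA2, hA3]; ring).trans (powO (by norm_num))
    have := coeffZero hGc H2
    simp at this
    linear_combination -this
  have hA5 : A 5 = 0 := by
    have hGc : ContinuousAt (fun _ : ℂ => -(A 5)) 0 := by fun_prop
    have H2 : (fun w : ℂ => (-(A 5)) * w ^ 5) =O[𝓝 0] fun w => ‖w‖ ^ (5 + 1) :=
      hpoly.congr_left fun w => by rw [hA2, hA3, hA4]; ring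
    have := coeffZero hGc H2
    simpa using this
  refine ⟨ha2, ha3, ha4, ha5, hA2, hA3, hA4, hA5, ?_⟩
  have hX : 2 * A 2 * A 3 * A 4 - A 3 ^ 3 - A 4 ^ 2 + A 3 * A 5 - A 2 ^ 2 * A 5
      = ((-(1/64) : ℝ) : ℂ) := by
    rw [hA2, hA3, hA4, hA5]; norm_num
  rw [hX, Complex.norm_real]
  norm_num
end

section
/- Define h(s,u) = 76288s⁶ + 64u(1−s²)[1740s⁴ + 6s²(2986−1447s²)u + 4(1621s⁴−2189s²+1216)u² + 2511s²(1−s²)u³] + 10368(1−s²)(1−u²)[31(1−s²)su² + 2(3+13s²)su + 57s³] + 5184(1−s²)(1−u²)[(1−s²)(31u²+225) + 32s²u]. Then h(s,u) ≤ 1166400 for all (s,u) ∈ [0,1] × [0,1]. -/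
theorem stmt_15 (s u : ℝ) (hs : s ∈ Set.Icc (0:ℝ) 1) (hu : u ∈ Set.Icc (0:ℝ) 1) :
    76288 * s ^ 6
      + 64 * u * (1 - s ^ 2) * (1740 * s ^ 4 + 6 * s ^ 2 * (2986 - 1447 * s ^ 2) * u
          + 4 * (1621 * s ^ 4 - 2189 * s ^ 2 + 1216) * u ^ 2
          + 2511 * s ^ 2 * (1 - s ^ 2) * u ^ 3)
      + 10368 * (1 - s ^ 2) * (1 - u ^ 2) * (31 * (1 - s ^ 2) * s * u ^ 2
          + 2 * (3 + 13 * s ^ 2) * s * u + 57 * s ^ 3)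
      + 5184 * (1 - s ^ 2) * (1 - u ^ 2) * ((1 - s ^ 2) * (31 * u ^ 2 + 225)
          + 32 * s ^ 2 * u)
    ≤ 1166400 := by
  obtain ⟨hs0, hs1⟩ := hs
  obtain ⟨hu0, hu1⟩ := hu
  have ha : (0:ℝ) ≤ 1 - s^2 := by nlinarith
  have hb : (0:ℝ) ≤ 1 - u := by linarith
  have hc : (0:ℝ) ≤ 1 - u^2 := by nlinarith
  have hq1 : (0:ℝ) ≤ (1-s^2)*(1-u^2)*((1-s^2)*u*(s-u)^2) := mul_nonneg (mul_nonneg ha hc) (mul_nonneg (mul_nonneg ha hu0) (sq_nonneg _))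
  have hq2 : (0:ℝ) ≤ (1-s^2)*(1-u^2)*((3+13*s^2)*(s-u)^2) := mul_nonneg (mul_nonneg ha hc) (mul_nonneg (by positivity) (sq_nonneg _))
  have hq3 : (0:ℝ) ≤ (1-s^2)*(1-u^2)*(s^2*(1-s)) := mul_nonneg (mul_nonneg ha hc) (mul_nonneg (sq_nonneg _) (by linarith))
  have h02 : (0:ℝ) ≤ (1-s^2)^3*u^2*(1-u)^3 := mul_nonneg (mul_nonneg (pow_nonneg ha 3) (pow_nonneg hu0 2)) (pow_nonneg hb 3)
  have h03 : (0:ℝ) ≤ (1-s^2)^3*u^3*(1-u)^2 := mul_nonneg (mul_nonneg (pow_nonneg ha 3) (pow_nonneg hu0 3)) (pow_nonneg hb 2)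
  have h04 : (0:ℝ) ≤ (1-s^2)^3*u^4*(1-u)^1 := mul_nonneg (mul_nonneg (pow_nonneg ha 3) (pow_nonneg hu0 4)) (pow_nonneg hb 1)
  have h05 : (0:ℝ) ≤ (1-s^2)^3*u^5 := mul_nonneg (pow_nonneg ha 3) (pow_nonneg hu0 5)
  have h10 : (0:ℝ) ≤ s^2*(1-s^2)^2*(1-u)^5 := mul_nonneg (mul_nonneg (pow_nonneg hs0 2) (pow_nonneg ha 2)) (pow_nonneg hb 5)
  have h11 : (0:ℝ) ≤ s^2*(1-s^2)^2*u^1*(1-u)^4 := mul_nonneg (mul_nonneg (mul_nonneg (pow_nonneg hs0 2) (pow_nonneg ha 2)) (pow_nonneg hu0 1)) (pow_nonneg hb 4)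
  have h12 : (0:ℝ) ≤ s^2*(1-s^2)^2*u^2*(1-u)^3 := mul_nonneg (mul_nonneg (mul_nonneg (pow_nonneg hs0 2) (pow_nonneg ha 2)) (pow_nonneg hu0 2)) (pow_nonneg hb 3)
  have h13 : (0:ℝ) ≤ s^2*(1-s^2)^2*u^3*(1-u)^2 := mul_nonneg (mul_nonneg (mul_nonneg (pow_nonneg hs0 2) (pow_nonneg ha 2)) (pow_nonneg hu0 3)) (pow_nonneg hb 2)
  have h14 : (0:ℝ) ≤ s^2*(1-s^2)^2*u^4*(1-u)^1 := mul_nonneg (mul_nonneg (mul_nonneg (pow_nonneg hs0 2) (pow_nonneg ha 2)) (pow_nonneg hu0 4)) (pow_nonneg hb 1)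
  have h15 : (0:ℝ) ≤ s^2*(1-s^2)^2*u^5 := mul_nonneg (mul_nonneg (pow_nonneg hs0 2) (pow_nonneg ha 2)) (pow_nonneg hu0 5)
  have h20 : (0:ℝ) ≤ s^4*(1-s^2)^1*(1-u)^5 := mul_nonneg (mul_nonneg (pow_nonneg hs0 4) (pow_nonneg ha 1)) (pow_nonneg hb 5)
  have h21 : (0:ℝ) ≤ s^4*(1-s^2)^1*u^1*(1-u)^4 := mul_nonneg (mul_nonneg (mul_nonneg (pow_nonneg hs0 4) (pow_nonneg ha 1)) (pow_nonneg hu0 1)) (pow_nonneg hb 4)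
  have h22 : (0:ℝ) ≤ s^4*(1-s^2)^1*u^2*(1-u)^3 := mul_nonneg (mul_nonneg (mul_nonneg (pow_nonneg hs0 4) (pow_nonneg ha 1)) (pow_nonneg hu0 2)) (pow_nonneg hb 3)
  have h23 : (0:ℝ) ≤ s^4*(1-s^2)^1*u^3*(1-u)^2 := mul_nonneg (mul_nonneg (mul_nonneg (pow_nonneg hs0 4) (pow_nonneg ha 1)) (pow_nonneg hu0 3)) (pow_nonneg hb 2)
  have h24 : (0:ℝ) ≤ s^4*(1-s^2)^1*u^4*(1-u)^1 := mul_nonneg (mul_nonneg (mul_nonneg (pow_nonneg hs0 4) (pow_nonneg ha 1)) (pow_nonneg hu0 4)) (pow_nonneg hb 1)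
  have h25 : (0:ℝ) ≤ s^4*(1-s^2)^1*u^5 := mul_nonneg (mul_nonneg (pow_nonneg hs0 4) (pow_nonneg ha 1)) (pow_nonneg hu0 5)
  have h30 : (0:ℝ) ≤ s^6*(1-u)^5 := mul_nonneg (pow_nonneg hs0 6) (pow_nonneg hb 5)
  have h31 : (0:ℝ) ≤ s^6*u^1*(1-u)^4 := mul_nonneg (mul_nonneg (pow_nonneg hs0 6) (pow_nonneg hu0 1)) (pow_nonneg hb 4)
  have h32 : (0:ℝ) ≤ s^6*u^2*(1-u)^3 := mul_nonneg (mul_nonneg (pow_nonneg hs0 6) (pow_nonneg hu0 2)) (pow_nonneg hb 3)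
  have h33 : (0:ℝ) ≤ s^6*u^3*(1-u)^2 := mul_nonneg (mul_nonneg (pow_nonneg hs0 6) (pow_nonneg hu0 3)) (pow_nonneg hb 2)
  have h34 : (0:ℝ) ≤ s^6*u^4*(1-u)^1 := mul_nonneg (mul_nonneg (pow_nonneg hs0 6) (pow_nonneg hu0 4)) (pow_nonneg hb 1)
  have h35 : (0:ℝ) ≤ s^6*u^5 := mul_nonneg (pow_nonneg hs0 6) (pow_nonneg hu0 5)
  linarith
end
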